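/- arXiv:1401.2205 — 4 statements merged into one kernel-verified Lean document; each statement's English description precedes it below -/
import Mathlib

section
/- For every ν ∈ (0, 1/2), every k ≥ 1, and all sufficiently large n, if m ≤ 2√(νn)/k then every test Ψ for distinguishing the uniform k-SAT distribution P_unif from the planted distribution P_planted on formulas of m clauses over n variables has max error probability at least 1/2 - ν; i.e., inf_Ψ max(P_unif(Ψ(φ)=1), P_planted(Ψ(φ)=0)) ≥ 1/2 - ν. -/
open Finset
open scoped Classical

/-- A clause: an injective tuple of `k` variables among `n`, each with a sign. -/
abbrev Clause (n k : ℕ) := {f : Fin k → Fin n // Function.Injective f} × (Fin k → Bool)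

/-- A formula: `m` clauses. -/
abbrev Formula (n m k : ℕ) := Fin m → Clause n k

def satClause {n k : ℕ} (x : Fin n → Bool) (c : Clause n k) : Prop :=
  ∃ j, x (c.1.1 j) = c.2 j

def satFormula {n m k : ℕ} (x : Fin n → Bool) (φ : Formula n m k) : Prop :=
  ∀ i, satClause x (φ i)

/-- Number of satisfying assignments. -/
noncomputable def Z {n m k : ℕ} (φ : Formula n m k) : ℕ :=
  (Finset.univ.filter fun x : Fin n → Bool => satFormula x φ).card

/-- The uniform distribution on formulas. -/
noncomputable def Punif (n m k : ℕ) : Formula n m k → ℝ :=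
  fun _ => (Fintype.card (Formula n m k) : ℝ)⁻¹

/-- The distribution planted at assignment `x`: each clause i.i.d. uniform among
clauses satisfied by `x`. -/
noncomputable def Px {n m k : ℕ} (x : Fin n → Bool) (φ : Formula n m k) : ℝ :=
  if satFormula x φ then ((Fintype.card {c : Clause n k // satClause x c} : ℝ)⁻¹) ^ m else 0

/-- The planted distribution: uniform mixture of the `Px` over `x ∈ {0,1}^n`. -/
noncomputable def Pplanted (n m k : ℕ) : Formula n m k → ℝ :=
  fun φ => ((2:ℝ) ^ n)⁻¹ * ∑ x : Fin n → Bool, Px x φ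

lemma card_exists_eq {k : ℕ} (hk : 1 ≤ k) (s : Fin k → Bool) :
    Fintype.card {g : Fin k → Bool // ∃ j, g j = s j} = 2 ^ k - 1 := by
  have h1 : Fintype.card {g : Fin k → Bool // ¬ ∃ j, g j = s j} = 1 := by
    have hiff : ∀ g : Fin k → Bool, (¬ ∃ j, g j = s j) ↔ g = fun j => !(s j) := by
      intro g
      constructor
      · intro h; funext j
        have hj : g j ≠ s j := fun hj => h ⟨j, hj⟩
        cases hsj : s j <;> cases hgj : g j <;> simp_all
      · rintro rfl ⟨j, hj⟩; simp at hj
    rw [Fintype.card_congr (Equiv.subtypeEquivRight hiff), Fintype.card_subtype_eq]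
  have h2 := Fintype.card_subtype_compl (fun g : Fin k → Bool => ∃ j, g j = s j)
  have h3 : Fintype.card {g : Fin k → Bool // ∃ j, g j = s j} ≤ 2 ^ k := by
    have := Fintype.card_subtype_le (fun g : Fin k → Bool => ∃ j, g j = s j)
    simpa using this
  have h4 : Fintype.card (Fin k → Bool) = 2 ^ k := by simp
  rw [h1, h4] at h2
  have h7 : 2^k = 1 + Fintype.card {g : Fin k → Bool // ∃ j, g j = s j} :=
    (Nat.sub_eq_iff_eq_add h3).mp h2.symm
  rw [h7, Nat.add_sub_cancel_left]

noncomputable def splitEquiv {α γ : Type*} (e : α → γ) (he : Function.Injective e) :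
    (γ → Bool) ≃ (α → Bool) × ({v : γ // v ∉ Set.range e} → Bool) :=
  { toFun := fun x => (fun a => x (e a), fun v => x v.1)
    invFun := fun p v => if hv : v ∈ Set.range e then p.1 hv.choose else p.2 ⟨v, hv⟩
    left_inv := by
      intro x
      funext v
      by_cases hv : v ∈ Set.range e
      · simp only [dif_pos hv]; rw [hv.choose_spec]
      · simp only [dif_neg hv]
    right_inv := by
      intro p
      apply Prod.ext
      · funext a
        have hv : e a ∈ Set.range e := ⟨a, rfl⟩
        show (if hv : e a ∈ Set.range e then p.1 hv.choose else p.2 ⟨e a, hv⟩) = p.1 a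
        rw [dif_pos hv, he hv.choose_spec]
      · funext v
        show (if hv : (v:γ) ∈ Set.range e then p.1 hv.choose else p.2 ⟨v, hv⟩) = p.2 v
        simp only [dif_neg v.2] }

def prodSubtypeFst {β δ : Type*} (P : β → Prop) :
    {p : β × δ // P p.1} ≃ {b // P b} × δ where
  toFun p := (⟨p.1.1, p.2⟩, p.1.2)
  invFun q := ⟨(q.1.1, q.2), q.1.2⟩
  left_inv p := rfl
  right_inv q := rfl

lemma card_subtype_comp_inj {α γ : Type*} [Fintype α] [Fintype γ]
    (e : α → γ) (he : Function.Injective e) (P : (α → Bool) → Prop) :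
    Fintype.card {x : γ → Bool // P (fun a => x (e a))}
      = Fintype.card {g : α → Bool // P g} * 2 ^ (Fintype.card γ - Fintype.card α) := by
  have E1 : {x : γ → Bool // P (fun a => x (e a))}
      ≃ {p : (α → Bool) × ({v : γ // v ∉ Set.range e} → Bool) // P p.1} :=
    (splitEquiv e he).subtypeEquiv (by intro x; exact Iff.rfl)
  rw [Fintype.card_congr E1, Fintype.card_congr (prodSubtypeFst _), Fintype.card_prod]
  congr 1
  rw [Fintype.card_fun, Fintype.card_bool]
  congr 1
  rw [Fintype.card_subtype_compl]
  congr 1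
  exact (Fintype.card_congr (Equiv.ofInjective e he)).symm

lemma card_ind {α : Type*} {i1 i2 : Fintype α} :
    @Fintype.card α i1 = @Fintype.card α i2 := by
  congr 1
  exact Subsingleton.elim _ _

lemma card_satClause {n k : ℕ} (hk : 1 ≤ k) (x : Fin n → Bool) :
    Fintype.card {c : Clause n k // satClause x c}
      = Fintype.card {f : Fin k → Fin n // Function.Injective f} * (2 ^ k - 1) := by
  have E : {c : Clause n k // satClause x c}
      ≃ Σ v : {f : Fin k → Fin n // Function.Injective f},
          {s : Fin k → Bool // ∃ j, x (v.1 j) = s j} :=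
    Equiv.subtypeProdEquivSigmaSubtype
      (fun (v : {f : Fin k → Fin n // Function.Injective f}) (s : Fin k → Bool) =>
        ∃ j, x (v.1 j) = s j)
  rw [Fintype.card_congr E, Fintype.card_sigma]
  have hcard : ∀ v : {f : Fin k → Fin n // Function.Injective f},
      Fintype.card {s : Fin k → Bool // ∃ j, x (v.1 j) = s j} = 2 ^ k - 1 := by
    intro v
    rw [← card_exists_eq hk (fun j => x (v.1 j))]
    exact Fintype.card_congr (Equiv.subtypeEquivRight (fun s => by
      constructor
      · rintro ⟨j, hj⟩; exact ⟨j, hj.symm⟩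
      · rintro ⟨j, hj⟩; exact ⟨j, hj.symm⟩))
  simp only [hcard, Finset.sum_const, Finset.card_univ, smul_eq_mul]

def Good {n m k : ℕ} (φ : Formula n m k) : Prop :=
  ∀ (i j : Fin m) (a b : Fin k), i < j → (φ i).1.1 a ≠ (φ j).1.1 b

lemma good_ne {n m k : ℕ} {φ : Formula n m k} (hφ : Good φ) :
    ∀ (i j : Fin m) (a b : Fin k), i ≠ j → (φ i).1.1 a ≠ (φ j).1.1 b := by
  intro i j a b hij
  rcases lt_or_gt_of_ne hij with h | h
  · exact hφ i j a b h
  · exact fun heq => hφ j i b a h heq.symm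

lemma e_inj {n m k : ℕ} (φ : Formula n m k) (hφ : Good φ) :
    Function.Injective (fun p : Fin m × Fin k => (φ p.1).1.1 p.2) := by
  rintro ⟨i, a⟩ ⟨j, b⟩ h
  simp only at h
  by_cases hij : i = j
  · subst hij
    exact Prod.ext rfl ((φ i).1.2 h)
  · exact absurd h (good_ne hφ i j a b hij)

lemma mk_le_n {n m k : ℕ} (φ : Formula n m k) (hφ : Good φ) : m * k ≤ n := by
  have := Fintype.card_le_of_injective _ (e_inj φ hφ)
  simpa using this

set_option maxHeartbeats 1000000 in
lemma card_sat_good {n m k : ℕ} (hk : 1 ≤ k) (φ : Formula n m k) (hφ : Good φ) :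
    Fintype.card {x : Fin n → Bool // satFormula x φ}
      = (2 ^ k - 1) ^ m * 2 ^ (n - m * k) := by
  set e := fun p : Fin m × Fin k => (φ p.1).1.1 p.2 with he_def
  have he := e_inj φ hφ
  have h := card_subtype_comp_inj e he (fun g => ∀ i, ∃ j, g (i, j) = (φ i).2 j)
  have h0 : Fintype.card {x : Fin n → Bool // satFormula x φ}
      = Fintype.card {x : Fin n → Bool // ∀ i, ∃ j, (fun a => x (e a)) (i, j) = (φ i).2 j} :=
    Fintype.card_congr (Equiv.subtypeEquivRight (fun x => Iff.rfl))
  rw [h0]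
  refine Eq.trans card_ind (h.trans ?_)
  have h1 : Fintype.card {g : Fin m × Fin k → Bool // ∀ i, ∃ j, g (i, j) = (φ i).2 j}
      = (2 ^ k - 1) ^ m := by
    have E1 : {g : Fin m × Fin k → Bool // ∀ i, ∃ j, g (i, j) = (φ i).2 j}
        ≃ {h : Fin m → Fin k → Bool // ∀ i, ∃ j, h i j = (φ i).2 j} :=
      (Equiv.curry (Fin m) (Fin k) Bool).subtypeEquiv (fun g => Iff.rfl)
    have E2 : {h : Fin m → Fin k → Bool // ∀ i, ∃ j, h i j = (φ i).2 j}
        ≃ ∀ i : Fin m, {gi : Fin k → Bool // ∃ j, gi j = (φ i).2 j} :=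
      Equiv.subtypePiEquivPi (p := fun (i : Fin m) (gi : Fin k → Bool) => ∃ j, gi j = (φ i).2 j)
    rw [Fintype.card_congr (E1.trans E2), Fintype.card_pi]
    simp only [card_exists_eq hk, Finset.prod_const, Finset.card_univ, Fintype.card_fin]
  congr 1
  · exact card_ind.trans h1
  · congr 1
    simp

lemma card_formula (n m k : ℕ) :
    Fintype.card (Formula n m k)
      = (Fintype.card {f : Fin k → Fin n // Function.Injective f} * 2 ^ k) ^ m := by
  rw [Fintype.card_fun, Fintype.card_prod, Fintype.card_fun]
  simp

lemma pointwise {n m k : ℕ} (hk : 1 ≤ k) (φ : Formula n m k) (hφ : Good φ) :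
    Pplanted n m k φ = Punif n m k φ := by
  set T := Fintype.card {f : Fin k → Fin n // Function.Injective f} with hT
  -- the sum
  have hPx : ∀ x : Fin n → Bool,
      Px x φ = if satFormula x φ then (((T * (2 ^ k - 1) : ℕ) : ℝ)⁻¹) ^ m else 0 := by
    intro x
    unfold Px
    rw [card_satClause hk x]
  have hsum : ∑ x : Fin n → Bool, Px x φ
      = ((2 ^ k - 1) ^ m * 2 ^ (n - m * k) : ℕ) * (((T * (2 ^ k - 1) : ℕ) : ℝ)⁻¹) ^ m := by
    simp only [hPx]
    rw [Finset.sum_ite, Finset.sum_const, Finset.sum_const_zero, add_zero, nsmul_eq_mul]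
    congr 1
    rw [← card_sat_good hk φ hφ, Fintype.card_subtype]
  rcases Nat.eq_zero_or_pos m with hm | hm
  · subst hm
    unfold Pplanted Punif
    rw [hsum]
    simp [card_formula]
  · -- m ≥ 1, so T ≥ 1
    have hTpos : 0 < T := by
      rw [hT]
      have : Nonempty {f : Fin k → Fin n // Function.Injective f} :=
        ⟨(φ ⟨0, hm⟩).1⟩
      exact Fintype.card_pos
    have hmk := mk_le_n φ hφ
    unfold Pplanted Punif
    rw [hsum, card_formula n m k, ← hT]
    have h2k : (1:ℕ) ≤ 2 ^ k := Nat.one_le_two_pow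
    have hA : ((2 ^ k - 1 : ℕ) : ℝ) = 2 ^ k - 1 := by
      push_cast [h2k]; ring
    have hApos : (0:ℝ) < 2 ^ k - 1 := by
      have : (2:ℝ) ^ 1 ≤ 2 ^ k := by
        apply pow_le_pow_right₀ (by norm_num) hk
      simp at this
      linarith
    push_cast [h2k]
    have h2n : (2:ℝ) ^ n = 2 ^ (n - m * k) * 2 ^ (m * k) := by
      rw [← pow_add, Nat.sub_add_cancel hmk]
    rw [h2n, pow_mul, inv_pow, mul_pow]
    have hTne : ((T:ℝ)) ≠ 0 := by positivity
    have hAne : ((2:ℝ) ^ k - 1) ≠ 0 := ne_of_gt hApos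
    have h2ne : ((2:ℝ) ^ k) ≠ 0 := by positivity
    have h2nk : ((2:ℝ) ^ (n - m*k)) ≠ 0 := by positivity
    field_simp
    ring

section tweak
variable {n m k : ℕ}

/-- Replace clause `j`'s variable tuple by its composition with the swap of `(φ i) a` and `w`. -/
noncomputable def tweak (i j : Fin m) (a : Fin k) (w : Fin n) (φ : Formula n m k) :
    Formula n m k :=
  Function.update φ j
    ⟨⟨Equiv.swap ((φ i).1.1 a) w ∘ (φ j).1.1,
      (Equiv.swap ((φ i).1.1 a) w).injective.comp (φ j).1.2⟩, (φ j).2⟩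

lemma tweak_apply_i {i j : Fin m} (hij : i ≠ j) (a : Fin k) (w : Fin n) (φ : Formula n m k) :
    tweak i j a w φ i = φ i := Function.update_of_ne hij _ _

lemma tweak_apply_j (i j : Fin m) (a : Fin k) (w : Fin n) (φ : Formula n m k) :
    tweak i j a w φ j =
      ⟨⟨Equiv.swap ((φ i).1.1 a) w ∘ (φ j).1.1,
        (Equiv.swap ((φ i).1.1 a) w).injective.comp (φ j).1.2⟩, (φ j).2⟩ :=
  Function.update_self _ _ _

lemma tweak_invol {i j : Fin m} (hij : i ≠ j) (a : Fin k) (w : Fin n) (φ : Formula n m k) :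
    tweak i j a w (tweak i j a w φ) = φ := by
  set ψ := tweak i j a w φ with hψ
  funext t
  by_cases ht : t = j
  · subst ht
    show Function.update ψ t _ t = φ t
    rw [Function.update_self]
    have hvi : (ψ i).1.1 a = (φ i).1.1 a := by rw [hψ, tweak_apply_i hij]
    have hvj : ψ t = ⟨⟨Equiv.swap ((φ i).1.1 a) w ∘ (φ t).1.1, _⟩, (φ t).2⟩ :=
      tweak_apply_j i t a w φ
    refine Prod.ext ?_ ?_
    · apply Subtype.ext
      show Equiv.swap ((ψ i).1.1 a) w ∘ (ψ t).1.1 = (φ t).1.1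
      rw [hvi, hvj]
      funext u
      exact Equiv.swap_apply_self _ _ _
    · show (ψ t).2 = (φ t).2
      rw [hvj]
  · show Function.update ψ j _ t = φ t
    rw [Function.update_of_ne ht, hψ]
    exact Function.update_of_ne ht _ _

lemma n_mul_card_pair (i j : Fin m) (hij : i ≠ j) (a b : Fin k) :
    n * Fintype.card {φ : Formula n m k // (φ i).1.1 a = (φ j).1.1 b}
      = Fintype.card (Formula n m k) := by
  suffices E : (Fin n × {φ : Formula n m k // (φ i).1.1 a = (φ j).1.1 b}) ≃ Formula n m k by
    rw [← Fintype.card_congr E, Fintype.card_prod, Fintype.card_fin]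
  refine
    { toFun := fun p => tweak i j a p.1 p.2.1
      invFun := fun ψ => ((ψ j).1.1 b, ⟨tweak i j a ((ψ j).1.1 b) ψ, ?_⟩)
      left_inv := ?_
      right_inv := ?_ }
  · -- the tweaked formula has the collision
    show (tweak i j a ((ψ j).1.1 b) ψ i).1.1 a = (tweak i j a ((ψ j).1.1 b) ψ j).1.1 b
    rw [tweak_apply_i hij, tweak_apply_j]
    exact (Equiv.swap_apply_right _ _).symm
  · rintro ⟨w, ⟨φ, hφ⟩⟩
    have hwb : (tweak i j a w φ j).1.1 b = w := by
      rw [tweak_apply_j]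
      show Equiv.swap ((φ i).1.1 a) w ((φ j).1.1 b) = w
      rw [← hφ, Equiv.swap_apply_left]
    simp only [hwb]
    exact Prod.ext rfl (Subtype.ext (tweak_invol hij a w φ))
  · intro ψ
    exact tweak_invol hij a _ ψ

end tweak

lemma bad_card_le (n m k : ℕ) :
    2 * (n * (univ.filter (fun φ : Formula n m k => ¬ Good φ)).card)
      ≤ m * m * (k * k) * Fintype.card (Formula n m k) := by
  classical
  set L : Finset (Fin m × Fin m) := univ.filter (fun p : Fin m × Fin m => p.1 < p.2) with hL
  set P : Finset ((Fin m × Fin m) × Fin k × Fin k) := L ×ˢ univ with hP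
  set E : (Fin m × Fin m) × Fin k × Fin k → Finset (Formula n m k) :=
    fun q => univ.filter (fun φ => (φ q.1.1).1.1 q.2.1 = (φ q.1.2).1.1 q.2.2) with hE
  have hsub : univ.filter (fun φ : Formula n m k => ¬ Good φ) ⊆ P.biUnion E := by
    intro φ hφ
    rw [Finset.mem_filter] at hφ
    have hbad := hφ.2
    unfold Good at hbad
    push_neg at hbad
    obtain ⟨i, j, a, b, hij, heq⟩ := hbad
    rw [Finset.mem_biUnion]
    refine ⟨((i, j), (a, b)), ?_, ?_⟩
    · rw [hP, Finset.mem_product]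
      exact ⟨by simp [hL, hij], Finset.mem_univ _⟩
    · simp [hE, heq]
  have hcard1 : (univ.filter (fun φ : Formula n m k => ¬ Good φ)).card
      ≤ ∑ q ∈ P, (E q).card :=
    le_trans (Finset.card_le_card hsub) (Finset.card_biUnion_le)
  have hcard2 : ∀ q ∈ P, n * (E q).card = Fintype.card (Formula n m k) := by
    rintro ⟨⟨i, j⟩, a, b⟩ hq
    rw [hP, Finset.mem_product, hL, Finset.mem_filter] at hq
    have hij : i ≠ j := ne_of_lt hq.1.2
    have := n_mul_card_pair (n := n) (k := k) i j hij a b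
    rw [Fintype.card_subtype] at this
    rw [← this]
  have hmain : n * (univ.filter (fun φ : Formula n m k => ¬ Good φ)).card
      ≤ P.card * Fintype.card (Formula n m k) := by
    calc n * (univ.filter (fun φ : Formula n m k => ¬ Good φ)).card
        ≤ n * ∑ q ∈ P, (E q).card := Nat.mul_le_mul_left n hcard1
      _ = ∑ q ∈ P, n * (E q).card := by rw [Finset.mul_sum]
      _ = ∑ q ∈ P, Fintype.card (Formula n m k) := Finset.sum_congr rfl hcard2
      _ = P.card * Fintype.card (Formula n m k) := by rw [Finset.sum_const, smul_eq_mul]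
  have hPcard : P.card = L.card * (k * k) := by
    rw [hP, Finset.card_product]
    congr 1
    simp [Fintype.card_prod]
  have hLcard : 2 * L.card ≤ m * m := by
    set U : Finset (Fin m × Fin m) := univ.filter (fun p : Fin m × Fin m => p.2 < p.1) with hU
    have hLU : L.card = U.card := by
      apply Finset.card_nbij' (fun p => (p.2, p.1)) (fun p => (p.2, p.1))
      · intro p hp; rw [hL, Finset.mem_coe, Finset.mem_filter] at hp; simp [hU, hp.2]
      · intro p hp; rw [hU, Finset.mem_coe, Finset.mem_filter] at hp; simp [hL, hp.2]
      · intro p _; rfl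
      · intro p _; rfl
    have hdisj : Disjoint L U := by
      rw [Finset.disjoint_left]
      intro p hp hp'
      rw [hL, Finset.mem_filter] at hp
      rw [hU, Finset.mem_filter] at hp'
      exact absurd hp'.2 (lt_asymm hp.2)
    have hunion : (L ∪ U).card ≤ m * m := by
      calc (L ∪ U).card ≤ (univ : Finset (Fin m × Fin m)).card := Finset.card_le_card (Finset.subset_univ _)
        _ = m * m := by simp [Finset.card_univ]
    rw [Finset.card_union_of_disjoint hdisj, ← hLU] at hunion
    omega
  calc 2 * (n * (univ.filter (fun φ : Formula n m k => ¬ Good φ)).card)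
      ≤ 2 * (P.card * Fintype.card (Formula n m k)) := Nat.mul_le_mul_left 2 hmain
    _ = (2 * L.card) * (k * k) * Fintype.card (Formula n m k) := by rw [hPcard]; ring
    _ ≤ m * m * (k * k) * Fintype.card (Formula n m k) := by
        apply Nat.mul_le_mul_right
        apply Nat.mul_le_mul_right
        exact hLcard

lemma Pplanted_nonneg {n m k : ℕ} (φ : Formula n m k) : 0 ≤ Pplanted n m k φ := by
  unfold Pplanted
  apply mul_nonneg (by positivity)
  apply Finset.sum_nonneg
  intro x _
  unfold Px
  split <;> positivity


/-- Information-theoretic lower bound: for `m ≤ 2√(νn)/k` and `n` large enough, every test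
has max error probability at least `1/2 - ν`. -/
theorem stmt7 (ν : ℝ) (hν : 0 < ν) (hν2 : ν < 1/2) (k : ℕ) (hk : 1 ≤ k) :
    ∃ N : ℕ, ∀ n ≥ N, ∀ m : ℕ, (m : ℝ) ≤ 2 * Real.sqrt (ν * n) / k →
      ∀ Ψ : Formula n m k → Bool,
        max (∑ φ ∈ Finset.univ.filter (fun φ : Formula n m k => Ψ φ = true), Punif n m k φ)
            (∑ φ ∈ Finset.univ.filter (fun φ : Formula n m k => Ψ φ = false), Pplanted n m k φ)
          ≥ 1/2 - ν := by
  refine ⟨max k 1, fun n hn m hm Ψ => ?_⟩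
  have hkn : k ≤ n := le_trans (le_max_left _ _) hn
  have hn1 : 1 ≤ n := le_trans (le_max_right _ _) hn
  -- nonempty formulas
  have hFne : Nonempty (Formula n m k) := by
    refine ⟨fun _ => ⟨⟨fun x => ⟨x.1, lt_of_lt_of_le x.2 hkn⟩, ?_⟩, fun _ => true⟩⟩
    intro x y h
    apply Fin.ext
    have h2 := congrArg Fin.val h
    simpa using h2
  have hFpos : 0 < Fintype.card (Formula n m k) := Fintype.card_pos
  set F := Fintype.card (Formula n m k) with hF
  have hFR : (0:ℝ) < F := by exact_mod_cast hFpos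
  set A := ∑ φ ∈ Finset.univ.filter (fun φ : Formula n m k => Ψ φ = true), Punif n m k φ with hA
  set B := ∑ φ ∈ Finset.univ.filter (fun φ : Formula n m k => Ψ φ = false), Pplanted n m k φ with hB
  set G := (univ : Finset (Formula n m k)).filter Good with hG
  set Bad := (univ : Finset (Formula n m k)).filter (fun φ => ¬ Good φ) with hBad
  -- bad mass bound
  have hbadsum : ∑ φ ∈ Bad, Punif n m k φ ≤ 2 * ν := by
    have h1 : ∑ φ ∈ Bad, Punif n m k φ = Bad.card * (F:ℝ)⁻¹ := by
      unfold Punif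
      rw [Finset.sum_const, nsmul_eq_mul, ← hF]
    rw [h1]
    have h2 := bad_card_le n m k
    have h2R : (2:ℝ) * (n * Bad.card) ≤ (m:ℝ) * m * (k * k) * F := by
      exact_mod_cast h2
    have hmk : (m:ℝ) * k ≤ 2 * Real.sqrt (ν * n) := by
      have hkR : (0:ℝ) < k := by exact_mod_cast hk
      rw [div_eq_mul_inv] at hm
      calc (m:ℝ) * k ≤ (2 * Real.sqrt (ν * n) * (k:ℝ)⁻¹) * k := by
            apply mul_le_mul_of_nonneg_right hm (le_of_lt hkR)
        _ = 2 * Real.sqrt (ν * n) := by field_simp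
    have hsq : ((m:ℝ) * k) ^ 2 ≤ 4 * (ν * n) := by
      have h4 : (2 * Real.sqrt (ν * n)) ^ 2 = 4 * (ν * n) := by
        rw [mul_pow, Real.sq_sqrt (by positivity)]
        ring
      rw [← h4]
      apply pow_le_pow_left₀ (by positivity) hmk
    have hnR : (0:ℝ) < n := by exact_mod_cast hn1
    have hcard : (Bad.card : ℝ) ≤ 2 * ν * F := by
      nlinarith [hFR.le, hnR]
    calc (Bad.card : ℝ) * (F:ℝ)⁻¹ ≤ (2 * ν * F) * (F:ℝ)⁻¹ := by
          apply mul_le_mul_of_nonneg_right hcard (by positivity)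
      _ = 2 * ν := by field_simp
  -- total mass
  have htot : ∑ φ ∈ G, Punif n m k φ + ∑ φ ∈ Bad, Punif n m k φ = 1 := by
    rw [hG, hBad, Finset.sum_filter_add_sum_filter_not]
    unfold Punif
    rw [Finset.sum_const, nsmul_eq_mul, Finset.card_univ]
    rw [← hF]
    field_simp
  -- split G by Ψ
  have hsplit : ∑ φ ∈ G.filter (fun φ => Ψ φ = true), Punif n m k φ
      + ∑ φ ∈ G.filter (fun φ => ¬ (Ψ φ = true)), Punif n m k φ
      = ∑ φ ∈ G, Punif n m k φ :=
    Finset.sum_filter_add_sum_filter_not G _ _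
  have hA1 : ∑ φ ∈ G.filter (fun φ => Ψ φ = true), Punif n m k φ ≤ A := by
    apply Finset.sum_le_sum_of_subset_of_nonneg
    · intro φ hφ
      rw [Finset.mem_filter] at hφ ⊢
      rw [hG, Finset.mem_filter] at hφ
      exact ⟨Finset.mem_univ _, hφ.2⟩
    · intro φ _ _
      unfold Punif
      positivity
  have hB1 : ∑ φ ∈ G.filter (fun φ => ¬ (Ψ φ = true)), Punif n m k φ ≤ B := by
    have heq : ∀ φ ∈ G.filter (fun φ => ¬ (Ψ φ = true)), Punif n m k φ = Pplanted n m k φ := by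
      intro φ hφ
      rw [Finset.mem_filter, hG, Finset.mem_filter] at hφ
      exact (pointwise hk φ hφ.1.2).symm
    rw [Finset.sum_congr rfl heq]
    apply Finset.sum_le_sum_of_subset_of_nonneg
    · intro φ hφ
      rw [Finset.mem_filter] at hφ ⊢
      rw [hG, Finset.mem_filter] at hφ
      refine ⟨Finset.mem_univ _, ?_⟩
      cases h : Ψ φ
      · rfl
      · exact absurd h hφ.2
    · intro φ _ _
      exact Pplanted_nonneg φ
  have hAB : 1 - 2 * ν ≤ A + B := by
    have := hsplit
    linarith [hA1, hB1, htot, hbadsum]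
  have hmax := max_le_max (le_refl A) (le_refl B)
  have h1 : A ≤ max A B := le_max_left A B
  have h2 : B ≤ max A B := le_max_right A B
  linarith
end

section
/- Place m = Δn balls independently and uniformly at random into n bins, Δ > 0 fixed. Let T be the number of bins with at least two balls. Then Cov(T_1, T_2) = E[T_1 T_2] - E[T_1]E[T_2] ≤ (3 + 3Δ)/n, where T_i indicates bin i has at least two balls; consequently Var(T) ≤ (4 + 3Δ)·n. -/
open Finset
open scoped Classical

/-- Expectation with respect to `m` balls placed i.i.d. uniformly into `n` bins. -/
noncomputable def expect (n m : ℕ) (f : (Fin m → Fin n) → ℝ) : ℝ :=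
  (∑ ω : Fin m → Fin n, f ω) / (n : ℝ) ^ m

/-- Indicator that bin `i` receives at least two balls. -/
noncomputable def Tind (n m i : ℕ) (ω : Fin m → Fin n) : ℝ :=
  if 2 ≤ (Finset.univ.filter fun j => (ω j).val = i).card then 1 else 0

/-- Number of bins receiving at least two balls. -/
noncomputable def Tcount (n m : ℕ) (ω : Fin m → Fin n) : ℝ :=
  ∑ i ∈ Finset.range n, Tind n m i ω


open Polynomial

noncomputable def Ncard (n m i : ℕ) (ω : Fin m → Fin n) : ℕ :=
  (Finset.univ.filter fun j => (ω j).val = i).card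

lemma sum_prod_eq {R : Type*} [CommSemiring R] (n m : ℕ) (g : Fin n → R) :
    ∑ ω : Fin m → Fin n, ∏ j, g (ω j) = (∑ v, g v) ^ m := by
  rw [← Fintype.piFinset_univ, ← Finset.prod_univ_sum]
  simp

lemma prod_pointwise {R : Type*} [CommSemiring R] (n m : ℕ) {i j : ℕ} (hij : i ≠ j)
    (z w : R) (ω : Fin m → Fin n) :
    (∏ k : Fin m, (if (ω k).val = i then z else if (ω k).val = j then w else 1))
      = z ^ (Ncard n m i ω) * w ^ (Ncard n m j ω) := by
  rw [← Finset.prod_filter_mul_prod_filter_not Finset.univ (fun k => (ω k).val = i)]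
  have h1 : (∏ k ∈ Finset.univ.filter (fun k => (ω k).val = i),
      (if (ω k).val = i then z else if (ω k).val = j then w else 1)) = z ^ Ncard n m i ω := by
    rw [Finset.prod_congr rfl (fun k hk => ?_), Finset.prod_const, Ncard]
    simp only [Finset.mem_filter] at hk
    simp [hk.2]
  have h2 : (∏ k ∈ Finset.univ.filter (fun k => ¬ (ω k).val = i),
      (if (ω k).val = i then z else if (ω k).val = j then w else 1)) = w ^ Ncard n m j ω := by
    have e1 : (∏ k ∈ Finset.univ.filter (fun k => ¬ (ω k).val = i),
        (if (ω k).val = i then z else if (ω k).val = j then w else 1))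
        = ∏ k ∈ Finset.univ.filter (fun k => ¬ (ω k).val = i),
          (if (ω k).val = j then w else 1) := by
      refine Finset.prod_congr rfl (fun k hk => ?_)
      simp only [Finset.mem_filter] at hk
      simp [hk.2]
    rw [e1, Finset.prod_ite, Finset.prod_const, Finset.prod_const_one, mul_one, Ncard]
    congr 2
    rw [Finset.filter_filter]
    refine Finset.filter_congr (fun k _ => ?_)
    constructor
    · rintro ⟨-, h⟩; exact h
    · intro h; exact ⟨by omega, h⟩
  rw [h1, h2]

lemma pair_sum {R : Type*} [CommRing R] (n m : ℕ) {i j : ℕ} (hi : i < n) (hj : j < n)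
    (hij : i ≠ j) (z w : R) :
    ∑ ω : Fin m → Fin n, z ^ (Ncard n m i ω) * w ^ (Ncard n m j ω)
      = (z + w + ((n : R) - 2)) ^ m := by
  have h := sum_prod_eq n m (fun v : Fin n => if v.val = i then z else if v.val = j then w else 1)
  simp only [prod_pointwise n m hij z w] at h
  rw [h]
  congr 1
  have key : ∀ v : Fin n, (if v.val = i then z else if v.val = j then w else 1)
      = (if v = (⟨i, hi⟩ : Fin n) then z - 1 else 0)
        + (if v = (⟨j, hj⟩ : Fin n) then w - 1 else 0) + 1 := by
    intro v
    rcases eq_or_ne v ⟨i, hi⟩ with rfl | hvi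
    · simp [Fin.ext_iff, hij, Ne.symm hij]
    · have : ¬ v.val = i := by simpa [Fin.ext_iff] using hvi
      rcases eq_or_ne v ⟨j, hj⟩ with rfl | hvj
      · simp [Fin.ext_iff, this]
      · have : ¬ v.val = j := by simpa [Fin.ext_iff] using hvj
        simp [*]
  rw [Finset.sum_congr rfl (fun v _ => key v)]
  rw [Finset.sum_add_distrib, Finset.sum_add_distrib, Finset.sum_ite_eq' Finset.univ,
    Finset.sum_ite_eq' Finset.univ, Finset.sum_const]
  simp only [Finset.mem_univ, if_true, Finset.card_univ, Fintype.card_fin, nsmul_eq_mul, mul_one]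
  ring

lemma count_pair (n m : ℕ) {i j : ℕ} (hi : i < n) (hj : j < n) (hij : i ≠ j) (a b : ℕ) :
    ∑ ω : Fin m → Fin n, ((if Ncard n m i ω = a then (1:ℝ) else 0)
        * (if Ncard n m j ω = b then (1:ℝ) else 0))
      = (m.choose b) * ((m - b).choose a) * ((n:ℝ) - 2) ^ (m - b - a) := by
  have h := pair_sum (R := Polynomial (Polynomial ℝ)) n m hi hj hij (C X) X
  have hq : (C X + X + ((n : Polynomial (Polynomial ℝ)) - 2))
      = X + C (X + C ((n:ℝ) - 2)) := by
    have h2 : (C (C (2:ℝ)) : Polynomial (Polynomial ℝ)) = 2 := by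
      simp [map_ofNat]
    push_cast
    simp only [map_add, map_sub, h2, map_natCast]
    ring
  rw [hq] at h
  have h2 := congrArg (fun p => coeff p b) h
  simp only [finset_sum_coeff, coeff_X_add_C_pow] at h2
  have h3 := congrArg (fun p => coeff p a) h2
  simp only [finset_sum_coeff] at h3
  have hL : ∀ ω : Fin m → Fin n,
      coeff (coeff ((C X : Polynomial (Polynomial ℝ)) ^ Ncard n m i ω * X ^ Ncard n m j ω) b) a
      = (if Ncard n m i ω = a then (1:ℝ) else 0) * (if Ncard n m j ω = b then (1:ℝ) else 0) := by
    intro ω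
    rw [← C_pow, coeff_C_mul, coeff_X_pow]
    rcases eq_or_ne (Ncard n m j ω) b with hb | hb
    · simp [hb, coeff_X_pow, eq_comm]
    · simp [Ne.symm hb, hb]
  rw [Finset.sum_congr rfl (fun ω _ => (hL ω))] at h3
  rw [h3]
  have : coeff ((X + C ((n:ℝ) - 2)) ^ (m - b) * (m.choose b : Polynomial ℝ)) a
      = ((n:ℝ) - 2) ^ (m - b - a) * ((m-b).choose a) * (m.choose b) := by
    rw [← C_eq_natCast, coeff_mul_C, coeff_X_add_C_pow]
  simp only [this] -- h3 RHS shape?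
  ring

lemma count_single (n m : ℕ) (hn : 2 ≤ n) {i : ℕ} (hi : i < n) (a : ℕ) :
    ∑ ω : Fin m → Fin n, (if Ncard n m i ω = a then (1:ℝ) else 0)
      = (m.choose a) * ((n:ℝ) - 1) ^ (m - a) := by
  set j : ℕ := if i = 0 then 1 else 0 with hjdef
  have hij : i ≠ j := by rcases eq_or_ne i 0 with h | h <;> simp [hjdef, h]
  have hj : j < n := by rcases eq_or_ne i 0 with h | h <;> simp [hjdef, h] <;> omega
  have h := pair_sum (R := Polynomial ℝ) n m hi hj hij X 1
  simp only [one_pow, mul_one] at h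
  have hq : ((X : Polynomial ℝ) + 1 + ((n : Polynomial ℝ) - 2)) = X + C ((n:ℝ) - 1) := by
    have : (C ((n:ℝ) - 1) : Polynomial ℝ) = (n : Polynomial ℝ) - 1 := by
      simp [map_sub, map_natCast]
    rw [this]; ring
  rw [hq] at h
  have h2 := congrArg (fun p => coeff p a) h
  simp only [finset_sum_coeff, coeff_X_add_C_pow, coeff_X_pow] at h2
  have e : (∑ ω : Fin m → Fin n, (if Ncard n m i ω = a then (1:ℝ) else 0))
      = ∑ ω : Fin m → Fin n, (if a = Ncard n m i ω then (1:ℝ) else 0) := by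
    simp_rw [eq_comm]
  rw [e, h2]; ring

set_option maxHeartbeats 1200000 in
lemma real_ineq (k n : ℕ) (hn : 2 ≤ n) (Δ : ℝ) (hΔ : 0 < Δ) (hm : (k:ℝ) + 2 = Δ * n) :
    (((n:ℝ) - 2)^(k+2) + 2*((k:ℝ)+2)*((n:ℝ)-2)^(k+1) + ((k:ℝ)+2)*((k:ℝ)+1)*((n:ℝ)-2)^k)
        / (n:ℝ)^(k+2)
      - ((((n:ℝ)-1)^(k+2) + ((k:ℝ)+2)*((n:ℝ)-1)^(k+1)) / (n:ℝ)^(k+2))^2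
      ≤ (3+3*Δ)/n := by
  have hc : (2:ℝ) ≤ (n:ℝ) := by exact_mod_cast hn
  have hc0 : (0:ℝ) < n := by linarith
  set c : ℝ := (n:ℝ) with hcdef
  set M : ℝ := (k:ℝ) + 2 with hMdef
  have hM1 : 1 ≤ M := by have : (0:ℝ) ≤ (k:ℝ) := Nat.cast_nonneg k; linarith
  have hM0 : 0 < M := by linarith
  have hMΔ : M = Δ * c := hm
  set x : ℝ := (c-1)/c with hxdef
  set y : ℝ := (c-2)/c with hydef
  have hx0 : 0 < x := by apply div_pos <;> linarith
  have hx1 : x ≤ 1 := by rw [div_le_one hc0]; linarith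
  have hy0 : 0 ≤ y := by apply div_nonneg <;> linarith
  have hyx : y ≤ x^2 := by
    rw [hxdef, hydef, div_pow, div_le_div_iff₀ hc0 (by positivity)]
    nlinarith
  have hA : ((c - 2)^(k+2) + 2*M*(c-2)^(k+1) + M*(M-1)*(c-2)^k) / c^(k+2)
      - (((c-1)^(k+2) + M*(c-1)^(k+1)) / c^(k+2))^2
      = y^(k+2) + 2*(M/c)*y^(k+1) + (M*(M-1)/c^2)*y^k
        - (x^(k+2) + (M/c)*x^(k+1))^2 := by
    rw [hxdef, hydef]
    simp only [div_pow]
    field_simp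
    ring
  have e0 : (k:ℝ)+1 = M - 1 := by rw [hMdef]; ring
  rw [e0, hA]
  have h1 : y^(k+2) ≤ x^(2*k+4) := by
    calc y^(k+2) ≤ (x^2)^(k+2) := pow_le_pow_left₀ hy0 hyx _
    _ = x^(2*k+4) := by rw [← pow_mul]; congr 1
  have h2 : y^(k+1) ≤ x^(2*k+2) := by
    calc y^(k+1) ≤ (x^2)^(k+1) := pow_le_pow_left₀ hy0 hyx _
    _ = x^(2*k+2) := by rw [← pow_mul]; congr 1
  have h3 : y^k ≤ x^(2*k) := by
    calc y^k ≤ (x^2)^k := pow_le_pow_left₀ hy0 hyx _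
    _ = x^(2*k) := by rw [← pow_mul]
  have hsq : (x^(k+2) + (M/c)*x^(k+1))^2
      = x^(2*k+4) + 2*(M/c)*x^(2*k+3) + (M/c)^2*x^(2*k+2) := by ring
  have hstep : y^(k+2) + 2*(M/c)*y^(k+1) + (M*(M-1)/c^2)*y^k
        - (x^(k+2) + (M/c)*x^(k+1))^2
      ≤ 2*(M/c)*(x^(2*k+2) - x^(2*k+3)) + (M*M/c^2)*(x^(2*k) - x^(2*k+2)) := by
    rw [hsq]
    have e2 : 2*(M/c)*y^(k+1) ≤ 2*(M/c)*x^(2*k+2) :=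
      mul_le_mul_of_nonneg_left h2 (by positivity)
    have e3 : (M*(M-1)/c^2)*y^k ≤ (M*M/c^2)*x^(2*k) := by
      apply mul_le_mul ?_ h3 (pow_nonneg hy0 k) (by positivity)
      apply div_le_div_of_nonneg_right ?_ (by positivity)
      nlinarith
    have e4 : (M/c)^2*x^(2*k+2) = (M*M/c^2)*x^(2*k+2) := by ring
    linarith [h1, e2, e3, e4]
  -- bound the two difference terms
  have hx1c : 1 - x = 1/c := by rw [hxdef]; field_simp; ring
  have hd1 : x^(2*k+2) - x^(2*k+3) ≤ 1/c := by
    have e : x^(2*k+3) = x^(2*k+2) * x := by ring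
    have h5 : x^(2*k+2) ≤ 1 := pow_le_one₀ hx0.le hx1
    have h5b := mul_le_mul_of_nonneg_right h5 (by linarith : (0:ℝ) ≤ 1 - x)
    rw [e, ← hx1c]
    linarith [h5b]
  have h6 : 1 - x^2 ≤ 2/c := by
    have e : 2/c - (1 - x^2) = 1/c^2 := by rw [hxdef]; field_simp; try ring
    have : (0:ℝ) ≤ 1/c^2 := by positivity
    linarith
  have hd2 : x^(2*k) - x^(2*k+2) ≤ x^(2*k) * (2/c) := by
    have e : x^(2*k+2) = x^(2*k) * x^2 := by ring
    have h6b := mul_le_mul_of_nonneg_left h6 (pow_nonneg hx0.le (2*k))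
    rw [e]
    linarith [h6b]
  -- exponential bound on x^(2k)
  have hxe : x ≤ Real.exp (-(1/c)) := by
    have h7 := Real.add_one_le_exp (-(1/c))
    have e : x = 1 - 1/c := by linarith [hx1c]
    rw [e]; linarith
  have hxk : x^(2*k) ≤ Real.exp (2 - 2*Δ) := by
    calc x^(2*k) ≤ Real.exp (-(1/c)) ^ (2*k) := pow_le_pow_left₀ hx0.le hxe _
    _ = Real.exp (-(((2*k:ℕ):ℝ)/c)) := by
        rw [← Real.exp_nat_mul]; congr 1; push_cast; ring
    _ ≤ Real.exp (2 - 2*Δ) := by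
        apply Real.exp_le_exp.mpr
        have hk : (k:ℝ) = Δ*c - 2 := by linarith [hMΔ]
        have e : (((2*k:ℕ):ℝ)/c) = 2*Δ - 4/c := by
          push_cast; rw [hk]; field_simp; try ring
        rw [e]
        have : 4/c ≤ 2 := by rw [div_le_iff₀ hc0]; linarith
        linarith
  have hΔexp : Δ^2 * Real.exp (2 - 2*Δ) ≤ 1 := by
    have h7 : Δ ≤ Real.exp (Δ - 1) := by
      have := Real.add_one_le_exp (Δ-1); linarith
    have h8 : Δ^2 ≤ Real.exp (Δ-1)^2 := by nlinarith
    have h9 : Real.exp (Δ-1)^2 * Real.exp (2-2*Δ) = 1 := by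
      rw [sq, ← Real.exp_add, ← Real.exp_add,
        show (Δ-1)+(Δ-1)+(2-2*Δ) = 0 by ring, Real.exp_zero]
    nlinarith [Real.exp_pos (2-2*Δ)]
  -- assemble
  have hterm1 : 2*(M/c)*(x^(2*k+2) - x^(2*k+3)) ≤ 2*Δ/c := by
    have := mul_le_mul_of_nonneg_left hd1 (show (0:ℝ) ≤ 2*(M/c) by positivity)
    calc 2*(M/c)*(x^(2*k+2) - x^(2*k+3)) ≤ 2*(M/c)*(1/c) := this
    _ = 2*Δ/c := by rw [hMΔ]; field_simp; try ring
  have hterm2 : (M*M/c^2)*(x^(2*k) - x^(2*k+2)) ≤ 2/c := by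
    have e1 : (M*M/c^2)*(x^(2*k) - x^(2*k+2)) ≤ (M*M/c^2)*(x^(2*k)*(2/c)) :=
      mul_le_mul_of_nonneg_left hd2 (by positivity)
    have e2 : (M*M/c^2)*(x^(2*k)*(2/c)) = (2*Δ^2/c) * x^(2*k) := by
      rw [hMΔ]; field_simp; try ring
    have e3 : (2*Δ^2/c) * x^(2*k) ≤ (2*Δ^2/c) * Real.exp (2-2*Δ) :=
      mul_le_mul_of_nonneg_left hxk (by positivity)
    have e4 : (2*Δ^2/c) * Real.exp (2-2*Δ) ≤ 2/c := by
      have e5 : (2*Δ^2/c) * Real.exp (2-2*Δ) = (2/c) * (Δ^2 * Real.exp (2-2*Δ)) := by ring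
      rw [e5]
      have : (0:ℝ) ≤ 2/c := by positivity
      nlinarith
    linarith
  have hfin : 2*Δ/c + 2/c ≤ (3+3*Δ)/c := by
    have e5 : (3+3*Δ)/c - (2*Δ/c + 2/c) = (1+Δ)/c := by field_simp; try ring
    have e6 : (0:ℝ) ≤ (1+Δ)/c := by positivity
    linarith
  linarith

lemma tind_zero (n m i : ℕ) (hm : m < 2) (ω : Fin m → Fin n) : Tind n m i ω = 0 := by
  unfold Tind
  rw [if_neg]
  intro h
  have h2 := Finset.card_filter_le Finset.univ (fun j : Fin m => (ω j).val = i)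
  rw [Finset.card_univ, Fintype.card_fin] at h2
  omega

lemma tind_decomp (n m i : ℕ) (ω : Fin m → Fin n) :
    1 - Tind n m i ω = (if Ncard n m i ω = 0 then (1:ℝ) else 0)
      + (if Ncard n m i ω = 1 then (1:ℝ) else 0) := by
  unfold Tind
  have : (Finset.univ.filter fun j => (ω j).val = i).card = Ncard n m i ω := rfl
  rw [this]
  rcases Nat.lt_or_ge (Ncard n m i ω) 2 with h | h
  · interval_cases h' : (Ncard n m i ω) <;> norm_num
  · rw [if_pos h, if_neg (by omega), if_neg (by omega)]; norm_num

lemma sum_one (n m : ℕ) : ∑ _ω : Fin m → Fin n, (1:ℝ) = (n:ℝ)^m := by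
  rw [Finset.sum_const, Finset.card_univ, Fintype.card_fun, Fintype.card_fin, Fintype.card_fin,
    nsmul_eq_mul, mul_one]
  push_cast
  ring

set_option maxHeartbeats 800000 in
lemma cov_bound (n m : ℕ) (Δ : ℝ) (hΔ : 0 < Δ) (hn : 2 ≤ n) (hm : (m:ℝ) = Δ * n)
    {i j : ℕ} (hi : i < n) (hj : j < n) (hij : i ≠ j) :
    _root_.expect n m (fun ω => Tind n m i ω * Tind n m j ω)
      - _root_.expect n m (Tind n m i) * _root_.expect n m (Tind n m j) ≤ (3 + 3*Δ)/n := by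
  have hn0 : (0:ℝ) < n := by positivity
  have hbpos : (0:ℝ) ≤ (3 + 3*Δ)/n := by positivity
  rcases Nat.lt_or_ge m 2 with hm2 | hm2
  · -- trivial case
    have hz : ∀ ω : Fin m → Fin n, Tind n m i ω = 0 := tind_zero n m i hm2
    have hz' : ∀ ω : Fin m → Fin n, Tind n m j ω = 0 := tind_zero n m j hm2
    unfold _root_.expect
    simp only [hz, hz', zero_mul, Finset.sum_const_zero, zero_div, mul_zero, sub_zero]
    simpa using hbpos
  obtain ⟨k, rfl⟩ : ∃ k, m = k + 2 := ⟨m - 2, by omega⟩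
  set m := k + 2 with hmdef
  have hD : (0:ℝ) < (n:ℝ)^m := by positivity
  -- single-bin sums
  have hBgen : ∀ l : ℕ, l < n → ∑ ω : Fin m → Fin n, (1 - Tind n m l ω)
      = ((n:ℝ)-1)^(k+2) + ((k:ℝ)+2)*((n:ℝ)-1)^(k+1) := by
    intro l hl
    rw [Finset.sum_congr rfl (fun ω _ => tind_decomp n m l ω), Finset.sum_add_distrib,
      count_single n m hn hl 0, count_single n m hn hl 1]
    simp only [Nat.choose_zero_right, Nat.choose_one_right, Nat.sub_zero]
    have e1 : m - 1 = k + 1 := by omega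
    rw [e1]
    simp only [hmdef]
    push_cast
    ring
  -- pair sum
  have hApair : ∑ ω : Fin m → Fin n, (1 - Tind n m i ω) * (1 - Tind n m j ω)
      = ((n:ℝ)-2)^(k+2) + 2*((k:ℝ)+2)*((n:ℝ)-2)^(k+1)
        + ((k:ℝ)+2)*((k:ℝ)+1)*((n:ℝ)-2)^k := by
    have expand : ∀ ω : Fin m → Fin n, (1 - Tind n m i ω) * (1 - Tind n m j ω)
        = ((if Ncard n m i ω = 0 then (1:ℝ) else 0) * (if Ncard n m j ω = 0 then (1:ℝ) else 0))
        + ((if Ncard n m i ω = 1 then (1:ℝ) else 0) * (if Ncard n m j ω = 0 then (1:ℝ) else 0))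
        + ((if Ncard n m i ω = 0 then (1:ℝ) else 0) * (if Ncard n m j ω = 1 then (1:ℝ) else 0))
        + ((if Ncard n m i ω = 1 then (1:ℝ) else 0) * (if Ncard n m j ω = 1 then (1:ℝ) else 0)) := by
      intro ω
      rw [tind_decomp n m i ω, tind_decomp n m j ω]
      ring
    rw [Finset.sum_congr rfl (fun ω _ => expand ω), Finset.sum_add_distrib,
      Finset.sum_add_distrib, Finset.sum_add_distrib,
      count_pair n m hi hj hij 0 0, count_pair n m hi hj hij 1 0,
      count_pair n m hi hj hij 0 1, count_pair n m hi hj hij 1 1]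
    simp only [Nat.choose_zero_right, Nat.choose_one_right, Nat.sub_zero]
    have e1 : m - 1 = k + 1 := by omega
    have e2 : m - 1 - 1 = k := by omega
    have e3 : m - 1 - 0 = k + 1 := by omega
    have e4 : m - 0 = m := by omega
    simp only [hmdef, show k+2-1 = k+1 from by omega, show k+2-1-1 = k from by omega,
      show k+2-1-0 = k+1 from by omega, Nat.sub_zero]
    push_cast
    ring
  -- put together
  have hone := sum_one n m
  have hBi := hBgen i hi
  have hBj := hBgen j hj
  have hTgen : ∀ l : ℕ, l < n → ∑ ω : Fin m → Fin n, Tind n m l ω = (n:ℝ)^m - (((n:ℝ)-1)^(k+2) + ((k:ℝ)+2)*((n:ℝ)-1)^(k+1)) := by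
    intro l hl
    have h := Finset.sum_sub_distrib (s := (Finset.univ : Finset (Fin m → Fin n)))
      (f := fun _ω : Fin m → Fin n => (1:ℝ)) (g := fun ω => Tind n m l ω)
    rw [hone, hBgen l hl] at h
    linarith [h]
  have hTi := hTgen i hi
  have hTj := hTgen j hj
  have hprod : ∑ ω : Fin m → Fin n, Tind n m i ω * Tind n m j ω
      = (((n:ℝ)-2)^(k+2) + 2*((k:ℝ)+2)*((n:ℝ)-2)^(k+1)
          + ((k:ℝ)+2)*((k:ℝ)+1)*((n:ℝ)-2)^k) + (n:ℝ)^m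
        - 2*(((n:ℝ)-1)^(k+2) + ((k:ℝ)+2)*((n:ℝ)-1)^(k+1)) := by
    have step : ∑ ω : Fin m → Fin n, Tind n m i ω * Tind n m j ω
        = (∑ ω : Fin m → Fin n, (1 - Tind n m i ω) * (1 - Tind n m j ω))
          - (∑ _ω : Fin m → Fin n, (1:ℝ))
          + ((∑ ω : Fin m → Fin n, Tind n m i ω) + (∑ ω : Fin m → Fin n, Tind n m j ω)) := by
      rw [← Finset.sum_add_distrib, ← Finset.sum_sub_distrib, ← Finset.sum_add_distrib]
      exact Finset.sum_congr rfl (fun ω _ => by ring)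
    rw [step, hApair, hone, hTi, hTj]
    ring
  unfold _root_.expect
  rw [hprod, hTi, hTj]
  have hMne : ((n:ℝ)^m) ≠ 0 := ne_of_gt hD
  have transform : ∀ A B : ℝ, (A + (n:ℝ)^m - 2*B)/((n:ℝ)^m)
      - ((n:ℝ)^m - B)/((n:ℝ)^m) * (((n:ℝ)^m - B)/((n:ℝ)^m))
      = A/((n:ℝ)^m) - (B/((n:ℝ)^m))^2 := by
    intro A B
    field_simp
    ring
  rw [transform]
  have hm' : (k:ℝ) + 2 = Δ * n := by
    rw [hmdef] at hm; push_cast at hm; linarith [hm]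
  have key := real_ineq k n hn Δ hΔ hm'
  simp only [hmdef]
  exact key

lemma var_expand (n m : ℕ) :
    _root_.expect n m (fun ω => (Tcount n m ω)^2) - (_root_.expect n m (Tcount n m))^2
      = ∑ i ∈ Finset.range n, ∑ j ∈ Finset.range n,
          (_root_.expect n m (fun ω => Tind n m i ω * Tind n m j ω)
            - _root_.expect n m (Tind n m i) * _root_.expect n m (Tind n m j)) := by
  unfold _root_.expect Tcount
  have h1 : ∀ ω : Fin m → Fin n, (∑ i ∈ Finset.range n, Tind n m i ω)^2
      = ∑ i ∈ Finset.range n, ∑ j ∈ Finset.range n, Tind n m i ω * Tind n m j ω := by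
    intro ω; rw [sq, Finset.sum_mul_sum]
  rw [Finset.sum_congr rfl (fun ω _ => h1 ω)]
  rw [Finset.sum_comm (s := Finset.univ) (t := Finset.range n)]
  rw [Finset.sum_congr rfl (fun i _ => Finset.sum_comm (s := Finset.univ) (t := Finset.range n))]
  rw [Finset.sum_comm (s := Finset.univ) (t := Finset.range n)
      (f := fun ω i => Tind n m i ω)]
  simp only [Finset.sum_sub_distrib, ← Finset.sum_div, ← Finset.sum_mul_sum]
  ring

lemma tind_sq (n m i : ℕ) (ω : Fin m → Fin n) :
    Tind n m i ω * Tind n m i ω = Tind n m i ω := by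
  unfold Tind; split <;> norm_num

lemma expect_tind_nonneg (n m i : ℕ) (hn : 0 < n) : 0 ≤ _root_.expect n m (Tind n m i) := by
  unfold _root_.expect
  apply div_nonneg ?_ (by positivity)
  apply Finset.sum_nonneg
  intro ω _
  unfold Tind; split <;> norm_num

lemma expect_tind_le_one (n m i : ℕ) (hn : 0 < n) : _root_.expect n m (Tind n m i) ≤ 1 := by
  unfold _root_.expect
  rw [div_le_one (by positivity)]
  calc ∑ ω : Fin m → Fin n, Tind n m i ω ≤ ∑ _ω : Fin m → Fin n, (1:ℝ) := by
        apply Finset.sum_le_sum; intro ω _; unfold Tind; split <;> norm_num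
  _ = (n:ℝ)^m := sum_one n m

lemma diag_bound (n m i : ℕ) (hn : 0 < n) :
    _root_.expect n m (fun ω => Tind n m i ω * Tind n m i ω)
      - _root_.expect n m (Tind n m i) * _root_.expect n m (Tind n m i) ≤ 1 := by
  have h1 : _root_.expect n m (fun ω => Tind n m i ω * Tind n m i ω)
      = _root_.expect n m (Tind n m i) := by
    unfold _root_.expect
    rw [Finset.sum_congr rfl (fun ω _ => tind_sq n m i ω)]
  rw [h1]
  have h2 := expect_tind_nonneg n m i hn
  have h3 := expect_tind_le_one n m i hn
  nlinarith


/-- For `m = Δn` balls in `n` bins, `Cov(T₁,T₂) ≤ (3+3Δ)/n` and `Var(T) ≤ (4+3Δ)n`. -/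
theorem stmt11 (n m : ℕ) (Δ : ℝ) (hΔ : 0 < Δ) (hn : 2 ≤ n) (hm : (m:ℝ) = Δ * n) :
    expect n m (fun ω => Tind n m 0 ω * Tind n m 1 ω)
        - expect n m (Tind n m 0) * expect n m (Tind n m 1) ≤ (3 + 3*Δ)/n ∧
    expect n m (fun ω => (Tcount n m ω)^2) - (expect n m (Tcount n m))^2 ≤ (4 + 3*Δ) * n := by
  have hn0 : 0 < n := by omega
  have hnR : (0:ℝ) < n := by positivity
  constructor
  · exact cov_bound n m Δ hΔ hn hm (by omega) (by omega) (by omega)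
  · rw [var_expand]
    have hq : (0:ℝ) ≤ (3+3*Δ)/n := by positivity
    have inner : ∀ i, i ∈ Finset.range n → ∑ j ∈ Finset.range n,
        (_root_.expect n m (fun ω => Tind n m i ω * Tind n m j ω)
          - _root_.expect n m (Tind n m i) * _root_.expect n m (Tind n m j)) ≤ 4 + 3*Δ := by
      intro i hiR
      have hi : i < n := Finset.mem_range.mp hiR
      calc ∑ j ∈ Finset.range n,
          (_root_.expect n m (fun ω => Tind n m i ω * Tind n m j ω)
            - _root_.expect n m (Tind n m i) * _root_.expect n m (Tind n m j))
          ≤ ∑ j ∈ Finset.range n, (if i = j then (1:ℝ) else (3+3*Δ)/n) := by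
            apply Finset.sum_le_sum
            intro j hjR
            have hj : j < n := Finset.mem_range.mp hjR
            rcases eq_or_ne i j with rfl | hij
            · rw [if_pos rfl]
              exact diag_bound n m i hn0
            · rw [if_neg hij]
              exact cov_bound n m Δ hΔ hn hm hi hj hij
      _ = ∑ j ∈ Finset.range n, ((if i = j then (1:ℝ) - (3+3*Δ)/n else 0) + (3+3*Δ)/n) := by
            apply Finset.sum_congr rfl
            intro j _
            split <;> ring
      _ ≤ 4 + 3*Δ := by
            rw [Finset.sum_add_distrib, Finset.sum_ite_eq (Finset.range n) i (fun _ => (1:ℝ) - (3+3*Δ)/n),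
              if_pos hiR, Finset.sum_const, Finset.card_range, nsmul_eq_mul]
            have : (n:ℝ) * ((3+3*Δ)/n) = 3+3*Δ := by field_simp
            rw [this]
            have h30 : (0:ℝ) ≤ 3+3*Δ := by positivity
            linarith [hq]
    calc ∑ i ∈ Finset.range n, ∑ j ∈ Finset.range n,
        (_root_.expect n m (fun ω => Tind n m i ω * Tind n m j ω)
          - _root_.expect n m (Tind n m i) * _root_.expect n m (Tind n m j))
        ≤ ∑ _i ∈ Finset.range n, (4 + 3*Δ) := Finset.sum_le_sum inner
    _ = (4 + 3*Δ) * n := by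
        rw [Finset.sum_const, Finset.card_range, nsmul_eq_mul]; ring
end

section
/- Place m = Δn balls independently and uniformly at random into n bins (Δ > 0 fixed). Let T be the number of bins receiving at least two balls. Then there exist constants ε_Δ > 0 and r_Δ > 0 (depending only on Δ) such that for all n large enough, P(T < ε_Δ n) ≤ r_Δ / n. -/
open Finset
open scoped Classical

section Stmt12Aux

variable {m n : ℕ}


lemma count_forall (P : Fin m → Fin n → Prop) :
    (Finset.univ.filter fun ω : Fin m → Fin n => ∀ j, P j (ω j)).card
      = ∏ j, (Finset.univ.filter fun x => P j x).card := by
  classical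
  calc (Finset.univ.filter fun ω : Fin m → Fin n => ∀ j, P j (ω j)).card
      = Fintype.card {ω : Fin m → Fin n // ∀ j, P j (ω j)} := (Fintype.card_subtype _).symm
    _ = Fintype.card (∀ j, {x : Fin n // P j x}) := Fintype.card_congr (Equiv.subtypePiEquivPi)
    _ = ∏ j, Fintype.card {x : Fin n // P j x} := Fintype.card_pi
    _ = _ := by
        apply Finset.prod_congr rfl
        intro j _
        exact Fintype.card_subtype _

lemma count_forced (D : Finset (Fin m)) (v : Fin m → Fin n) (S : Finset (Fin n)) :
    (Finset.univ.filter fun ω : Fin m → Fin n =>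
        ∀ j, (j ∈ D → ω j = v j) ∧ (j ∉ D → ω j ∉ S)).card
      = (n - S.card) ^ (m - D.card) := by
  classical
  have hc : (Finset.univ.filter fun ω : Fin m → Fin n =>
        ∀ j, (j ∈ D → ω j = v j) ∧ (j ∉ D → ω j ∉ S)).card
      = ∏ j, (Finset.univ.filter fun x : Fin n =>
          (j ∈ D → x = v j) ∧ (j ∉ D → x ∉ S)).card := by
    convert count_forall (fun j x => (j ∈ D → x = v j) ∧ (j ∉ D → x ∉ S)) using 2
    · ext ω; simp
    · congr 1; ext x; simp
  rw [hc]
  have h : ∀ j : Fin m,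
      (Finset.univ.filter fun x : Fin n => (j ∈ D → x = v j) ∧ (j ∉ D → x ∉ S)).card
        = if j ∈ D then 1 else n - S.card := by
    intro j
    by_cases hj : j ∈ D
    · have : (Finset.univ.filter fun x : Fin n => (j ∈ D → x = v j) ∧ (j ∉ D → x ∉ S))
          = {v j} := by
        ext x; simp [hj]
      rw [this]; simp [hj]
    · have : (Finset.univ.filter fun x : Fin n => (j ∈ D → x = v j) ∧ (j ∉ D → x ∉ S))
          = Finset.univ \ S := by
        ext x; simp [hj]
      rw [this]; simp [hj, Finset.card_sdiff_of_subset (Finset.subset_univ S)]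
  rw [Finset.prod_congr rfl (fun j _ => h j), Finset.prod_ite, Finset.prod_const_one, one_mul,
    Finset.prod_const]
  congr 1
  rw [Finset.filter_not]
  simp [Finset.card_sdiff_of_subset (Finset.subset_univ D)]





lemma cnt0 (i : Fin n) :
    (Finset.univ.filter fun ω : Fin m → Fin n =>
        (Finset.univ.filter fun j => ω j = i).card = 0).card = (n-1)^m := by
  classical
  have key := count_forced (∅ : Finset (Fin m)) (fun _ => i) {i}
  simp only [Finset.card_empty, Finset.card_singleton, Nat.sub_zero] at key
  rw [← key]
  congr 1
  ext ω
  simp [Finset.card_eq_zero, Finset.filter_eq_empty_iff]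

lemma singleton_fiber {ω : Fin m → Fin n} {i : Fin n} {j0 : Fin m}
    (h : ∀ j, (j ∈ ({j0} : Finset (Fin m)) → ω j = i)
      ∧ (j ∉ ({j0} : Finset (Fin m)) → ω j ∉ ({i} : Finset (Fin n)))) :
    Finset.univ.filter (fun j => ω j = i) = {j0} := by
  ext j
  simp only [Finset.mem_filter, Finset.mem_univ, true_and, Finset.mem_singleton]
  constructor
  · intro hj
    by_contra hne
    exact (h j).2 (by simpa using hne) (by simpa using hj)
  · rintro rfl
    exact (h _).1 (Finset.mem_singleton_self _)

lemma cnt1 (i : Fin n) :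
    (Finset.univ.filter fun ω : Fin m → Fin n =>
        (Finset.univ.filter fun j => ω j = i).card = 1).card = m * (n-1)^(m-1) := by
  classical
  have hsplit : (Finset.univ.filter fun ω : Fin m → Fin n =>
        (Finset.univ.filter fun j => ω j = i).card = 1)
      = Finset.univ.biUnion (fun j0 : Fin m =>
          Finset.univ.filter fun ω : Fin m → Fin n =>
            ∀ j, (j ∈ ({j0} : Finset (Fin m)) → ω j = i)
              ∧ (j ∉ ({j0} : Finset (Fin m)) → ω j ∉ ({i} : Finset (Fin n)))) := by
    ext ω
    constructor
    · intro hω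
      have h := (Finset.mem_filter.mp hω).2
      obtain ⟨j0, hj0⟩ := Finset.card_eq_one.mp h
      have hmem : ∀ j, ω j = i ↔ j = j0 := by
        intro j
        constructor
        · intro hj
          have : j ∈ Finset.univ.filter (fun j => ω j = i) :=
            Finset.mem_filter.mpr ⟨Finset.mem_univ _, hj⟩
          rw [hj0] at this
          exact Finset.mem_singleton.mp this
        · intro hj
          have h1 : j0 ∈ Finset.univ.filter (fun j => ω j = i) := by
            rw [hj0]; exact Finset.mem_singleton_self _
          exact hj ▸ (Finset.mem_filter.mp h1).2
      refine Finset.mem_biUnion.mpr ⟨j0, Finset.mem_univ _,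
        Finset.mem_filter.mpr ⟨Finset.mem_univ _, fun j => ⟨?_, ?_⟩⟩⟩
      · intro hj
        exact (hmem j).mpr (Finset.mem_singleton.mp hj)
      · intro hj h'
        exact hj (Finset.mem_singleton.mpr ((hmem j).mp (Finset.mem_singleton.mp h')))
    · intro hω
      obtain ⟨j0, -, hf⟩ := Finset.mem_biUnion.mp hω
      have h := (Finset.mem_filter.mp hf).2
      refine Finset.mem_filter.mpr ⟨Finset.mem_univ _, ?_⟩
      rw [singleton_fiber h, Finset.card_singleton]
  rw [hsplit, Finset.card_biUnion]
  · have hcard : ∀ j0 : Fin m, (Finset.univ.filter fun ω : Fin m → Fin n =>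
        ∀ j, (j ∈ ({j0} : Finset (Fin m)) → ω j = i)
          ∧ (j ∉ ({j0} : Finset (Fin m)) → ω j ∉ ({i} : Finset (Fin n)))).card
        = (n-1)^(m-1) := by
      intro j0
      have := count_forced ({j0} : Finset (Fin m)) (fun _ => i) ({i} : Finset (Fin n))
      simpa using this
    simp only [hcard, Finset.sum_const, Finset.card_univ, Fintype.card_fin, smul_eq_mul]
  · intro j0 _ j1 _ hne
    rw [Function.onFun, Finset.disjoint_left]
    intro ω h0 h1
    have h0' := (Finset.mem_filter.mp h0).2
    have h1' := (Finset.mem_filter.mp h1).2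
    have e0 : ω j0 = i := (h0' j0).1 (Finset.mem_singleton_self _)
    exact ((h1' j0).2 (by simpa using hne)) (by simpa using e0)





lemma cnt00 {i i' : Fin n} (h : i ≠ i') :
    (Finset.univ.filter fun ω : Fin m → Fin n =>
        (Finset.univ.filter fun j => ω j = i).card = 0 ∧
        (Finset.univ.filter fun j => ω j = i').card = 0).card = (n-2)^m := by
  classical
  have key := count_forced (∅ : Finset (Fin m)) (fun _ => i) ({i, i'} : Finset (Fin n))
  have hS : ({i, i'} : Finset (Fin n)).card = 2 := by
    rw [Finset.card_insert_of_notMem (by simpa using h), Finset.card_singleton]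
  rw [hS] at key
  simp only [Finset.card_empty, Nat.sub_zero] at key
  rw [← key]
  congr 1
  ext ω
  simp only [Finset.mem_filter, Finset.mem_univ, true_and, Finset.card_eq_zero,
    Finset.filter_eq_empty_iff, Finset.mem_insert, Finset.mem_singleton, Finset.notMem_empty,
    false_implies, not_false_iff, true_and, not_or, true_implies, forall_and]


lemma fiber_singleton_of {ω : Fin m → Fin n} {i : Fin n} {j0 : Fin m}
    (h0 : ω j0 = i) (h1 : ∀ j, j ≠ j0 → ω j ≠ i) :
    Finset.univ.filter (fun j => ω j = i) = {j0} := by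
  ext j
  simp only [Finset.mem_filter, Finset.mem_univ, true_and, Finset.mem_singleton]
  constructor
  · intro hj
    by_contra hne
    exact h1 j hne hj
  · rintro rfl; exact h0

lemma cnt10 {i i' : Fin n} (h : i ≠ i') :
    (Finset.univ.filter fun ω : Fin m → Fin n =>
        (Finset.univ.filter fun j => ω j = i).card = 1 ∧
        (Finset.univ.filter fun j => ω j = i').card = 0).card = m * (n-2)^(m-1) := by
  classical
  have hS : ({i, i'} : Finset (Fin n)).card = 2 := by
    rw [Finset.card_insert_of_notMem (by simpa using h), Finset.card_singleton]
  have hsplit : (Finset.univ.filter fun ω : Fin m → Fin n =>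
        (Finset.univ.filter fun j => ω j = i).card = 1 ∧
        (Finset.univ.filter fun j => ω j = i').card = 0)
      = Finset.univ.biUnion (fun j0 : Fin m =>
          Finset.univ.filter fun ω : Fin m → Fin n =>
            ∀ j, (j ∈ ({j0} : Finset (Fin m)) → ω j = i)
              ∧ (j ∉ ({j0} : Finset (Fin m)) → ω j ∉ ({i, i'} : Finset (Fin n)))) := by
    ext ω
    constructor
    · intro hω
      obtain ⟨h1, h0⟩ := (Finset.mem_filter.mp hω).2
      obtain ⟨j0, hj0⟩ := Finset.card_eq_one.mp h1
      have hi' : ∀ j, ω j ≠ i' := by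
        rw [Finset.card_eq_zero, Finset.filter_eq_empty_iff] at h0
        exact fun j => h0 (Finset.mem_univ j)
      have hmemi : ∀ j, ω j = i ↔ j = j0 := by
        intro j
        constructor
        · intro hj
          have : j ∈ Finset.univ.filter (fun j => ω j = i) :=
            Finset.mem_filter.mpr ⟨Finset.mem_univ _, hj⟩
          rw [hj0] at this
          exact Finset.mem_singleton.mp this
        · intro hj
          have h1' : j0 ∈ Finset.univ.filter (fun j => ω j = i) := by
            rw [hj0]; exact Finset.mem_singleton_self _
          exact hj ▸ (Finset.mem_filter.mp h1').2
      refine Finset.mem_biUnion.mpr ⟨j0, Finset.mem_univ _,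
        Finset.mem_filter.mpr ⟨Finset.mem_univ _, fun j => ⟨?_, ?_⟩⟩⟩
      · intro hj
        exact (hmemi j).mpr (Finset.mem_singleton.mp hj)
      · intro hj hbad
        rcases Finset.mem_insert.mp hbad with hbad | hbad
        · exact hj (Finset.mem_singleton.mpr ((hmemi j).mp hbad))
        · exact hi' j (Finset.mem_singleton.mp hbad)
    · intro hω
      obtain ⟨j0, -, hf⟩ := Finset.mem_biUnion.mp hω
      have hc := (Finset.mem_filter.mp hf).2
      have e0 : ω j0 = i := (hc j0).1 (Finset.mem_singleton_self _)
      refine Finset.mem_filter.mpr ⟨Finset.mem_univ _, ?_, ?_⟩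
      · rw [fiber_singleton_of e0 (fun j hj hbad => (hc j).2 (by simpa using hj)
          (by simp [hbad])), Finset.card_singleton]
      · rw [Finset.card_eq_zero, Finset.filter_eq_empty_iff]
        intro j _
        by_cases hj : j = j0
        · subst hj; rw [e0]; exact h
        · intro hbad
          exact (hc j).2 (by simpa using hj) (by simp [hbad])
  rw [hsplit, Finset.card_biUnion]
  · have hcard : ∀ j0 : Fin m, (Finset.univ.filter fun ω : Fin m → Fin n =>
        ∀ j, (j ∈ ({j0} : Finset (Fin m)) → ω j = i)
          ∧ (j ∉ ({j0} : Finset (Fin m)) → ω j ∉ ({i, i'} : Finset (Fin n)))).card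
        = (n-2)^(m-1) := by
      intro j0
      have := count_forced ({j0} : Finset (Fin m)) (fun _ => i) ({i, i'} : Finset (Fin n))
      rw [hS] at this
      simpa using this
    simp only [hcard, Finset.sum_const, Finset.card_univ, Fintype.card_fin, smul_eq_mul]
  · intro j0 _ j1 _ hne
    rw [Function.onFun, Finset.disjoint_left]
    intro ω h0 h1
    have h0' := (Finset.mem_filter.mp h0).2
    have h1' := (Finset.mem_filter.mp h1).2
    have e0 : ω j0 = i := (h0' j0).1 (Finset.mem_singleton_self _)
    exact ((h1' j0).2 (by simpa using hne)) (by simp [e0])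

lemma cnt11 {i i' : Fin n} (h : i ≠ i') :
    (Finset.univ.filter fun ω : Fin m → Fin n =>
        (Finset.univ.filter fun j => ω j = i).card = 1 ∧
        (Finset.univ.filter fun j => ω j = i').card = 1).card
      = m * ((m-1) * (n-2)^(m-2)) := by
  classical
  have hS : ({i, i'} : Finset (Fin n)).card = 2 := by
    rw [Finset.card_insert_of_notMem (by simpa using h), Finset.card_singleton]
  set E : Fin m → Fin m → Finset (Fin m → Fin n) := fun j0 j1 =>
    Finset.univ.filter fun ω : Fin m → Fin n =>
      ∀ j, (j ∈ ({j0, j1} : Finset (Fin m)) → ω j = (if j = j0 then i else i'))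
        ∧ (j ∉ ({j0, j1} : Finset (Fin m)) → ω j ∉ ({i, i'} : Finset (Fin n))) with hE
  have hEmem : ∀ {j0 j1 : Fin m} {ω : Fin m → Fin n}, j1 ≠ j0 → ω ∈ E j0 j1 →
      ω j0 = i ∧ ω j1 = i' ∧ ∀ j, j ≠ j0 → j ≠ j1 → ω j ≠ i ∧ ω j ≠ i' := by
    intro j0 j1 ω hne hω
    have hc := (Finset.mem_filter.mp hω).2
    have e0 : ω j0 = i := by
      have := (hc j0).1 (by simp)
      simpa using this
    have e1 : ω j1 = i' := by
      have := (hc j1).1 (by simp)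
      simpa [hne] using this
    refine ⟨e0, e1, fun j hj0 hj1 => ?_⟩
    have := (hc j).2 (by simp [hj0, hj1])
    constructor
    · intro hbad; exact this (by simp [hbad])
    · intro hbad; exact this (by simp [hbad])
  have hsplit : (Finset.univ.filter fun ω : Fin m → Fin n =>
        (Finset.univ.filter fun j => ω j = i).card = 1 ∧
        (Finset.univ.filter fun j => ω j = i').card = 1)
      = Finset.univ.biUnion (fun j0 : Fin m =>
          (Finset.univ.erase j0).biUnion (fun j1 => E j0 j1)) := by
    ext ω
    constructor
    · intro hω
      obtain ⟨h1, h1'⟩ := (Finset.mem_filter.mp hω).2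
      obtain ⟨j0, hj0⟩ := Finset.card_eq_one.mp h1
      obtain ⟨j1, hj1⟩ := Finset.card_eq_one.mp h1'
      have hmemi : ∀ j, ω j = i ↔ j = j0 := by
        intro j
        rw [show (j = j0) ↔ j ∈ ({j0} : Finset (Fin m)) from (Finset.mem_singleton).symm, ← hj0]
        simp
      have hmemi' : ∀ j, ω j = i' ↔ j = j1 := by
        intro j
        rw [show (j = j1) ↔ j ∈ ({j1} : Finset (Fin m)) from (Finset.mem_singleton).symm, ← hj1]
        simp
      have e0 : ω j0 = i := (hmemi j0).mpr rfl
      have e1 : ω j1 = i' := (hmemi' j1).mpr rfl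
      have hne : j1 ≠ j0 := by
        intro hbad
        rw [hbad] at e1
        rw [e0] at e1
        exact h e1
      refine Finset.mem_biUnion.mpr ⟨j0, Finset.mem_univ _,
        Finset.mem_biUnion.mpr ⟨j1, Finset.mem_erase.mpr ⟨hne, Finset.mem_univ _⟩, ?_⟩⟩
      refine Finset.mem_filter.mpr ⟨Finset.mem_univ _, fun j => ⟨?_, ?_⟩⟩
      · intro hj
        rcases Finset.mem_insert.mp hj with rfl | hj
        · simpa using e0
        · have : j = j1 := Finset.mem_singleton.mp hj
          subst this
          simp [hne, e1]
      · intro hj hbad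
        simp only [Finset.mem_insert, Finset.mem_singleton, not_or] at hj
        rcases Finset.mem_insert.mp hbad with hbad | hbad
        · exact hj.1 ((hmemi j).mp hbad)
        · exact hj.2 ((hmemi' j).mp (Finset.mem_singleton.mp hbad))
    · intro hω
      obtain ⟨j0, -, hω1⟩ := Finset.mem_biUnion.mp hω
      obtain ⟨j1, hj1e, hω2⟩ := Finset.mem_biUnion.mp hω1
      have hne : j1 ≠ j0 := (Finset.mem_erase.mp hj1e).1
      obtain ⟨e0, e1, hrest⟩ := hEmem hne hω2
      refine Finset.mem_filter.mpr ⟨Finset.mem_univ _, ?_, ?_⟩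
      · rw [fiber_singleton_of e0 (fun j hj hbad => ?_), Finset.card_singleton]
        by_cases hj1 : j = j1
        · subst hj1; rw [e1] at hbad; exact h hbad.symm
        · exact (hrest j hj hj1).1 hbad
      · rw [fiber_singleton_of e1 (fun j hj hbad => ?_), Finset.card_singleton]
        by_cases hj0 : j = j0
        · subst hj0; rw [e0] at hbad; exact h hbad
        · exact (hrest j hj0 hj).2 hbad
  rw [hsplit]
  rw [Finset.card_biUnion]
  · have inner : ∀ j0 : Fin m, ((Finset.univ.erase j0).biUnion (fun j1 => E j0 j1)).card
        = (m-1) * (n-2)^(m-2) := by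
      intro j0
      rw [Finset.card_biUnion]
      · have hcard : ∀ j1 ∈ Finset.univ.erase j0, (E j0 j1).card = (n-2)^(m-2) := by
          intro j1 hj1
          have hne : j1 ≠ j0 := (Finset.mem_erase.mp hj1).1
          have hD : ({j0, j1} : Finset (Fin m)).card = 2 := by
            rw [Finset.card_insert_of_notMem (by simpa using hne.symm), Finset.card_singleton]
          have := count_forced ({j0, j1} : Finset (Fin m))
            (fun j => if j = j0 then i else i') ({i, i'} : Finset (Fin n))
          rw [hS, hD] at this
          exact this
        rw [Finset.sum_congr rfl hcard, Finset.sum_const, smul_eq_mul,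
          Finset.card_erase_of_mem (Finset.mem_univ _), Finset.card_univ, Fintype.card_fin]
      · intro j1 hj1 j1' hj1' hne'
        rw [Function.onFun, Finset.disjoint_left]
        intro ω hm1 hm2
        obtain ⟨-, e1, -⟩ := hEmem (Finset.mem_erase.mp hj1).1 hm1
        obtain ⟨-, -, hrest⟩ := hEmem (Finset.mem_erase.mp hj1').1 hm2
        exact (hrest j1 (Finset.mem_erase.mp hj1).1 hne').2 e1
    rw [Finset.sum_congr rfl (fun j0 _ => inner j0), Finset.sum_const, smul_eq_mul,
      Finset.card_univ, Fintype.card_fin]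
  · intro j0 _ j0' _ hne
    rw [Function.onFun, Finset.disjoint_left]
    intro ω hm1 hm2
    obtain ⟨j1, hj1e, hω1⟩ := Finset.mem_biUnion.mp hm1
    obtain ⟨j1', hj1e', hω2⟩ := Finset.mem_biUnion.mp hm2
    obtain ⟨e0, -, -⟩ := hEmem (Finset.mem_erase.mp hj1e).1 hω1
    obtain ⟨e0', e1', hrest'⟩ := hEmem (Finset.mem_erase.mp hj1e').1 hω2
    by_cases hj : j0 = j1'
    · subst hj
      rw [e0] at e1'
      exact h e1'
    · exact (hrest' j0 hne hj).1 e0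



lemma cnt_le1_split (i : Fin n) :
    (Finset.univ.filter fun ω : Fin m → Fin n =>
        (Finset.univ.filter fun j => ω j = i).card ≤ 1).card
      = (Finset.univ.filter fun ω : Fin m → Fin n =>
          (Finset.univ.filter fun j => ω j = i).card = 0).card
        + (Finset.univ.filter fun ω : Fin m → Fin n =>
          (Finset.univ.filter fun j => ω j = i).card = 1).card := by
  classical
  rw [Finset.card_filter, Finset.card_filter, Finset.card_filter, ← Finset.sum_add_distrib]
  apply Finset.sum_congr rfl
  intro ω _
  split_ifs <;> omega

lemma pair_le1_split {i i' : Fin n} :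
    (Finset.univ.filter fun ω : Fin m → Fin n =>
        (Finset.univ.filter fun j => ω j = i).card ≤ 1 ∧
        (Finset.univ.filter fun j => ω j = i').card ≤ 1).card
      = (Finset.univ.filter fun ω : Fin m → Fin n =>
          (Finset.univ.filter fun j => ω j = i).card = 0 ∧
          (Finset.univ.filter fun j => ω j = i').card = 0).card
        + (Finset.univ.filter fun ω : Fin m → Fin n =>
          (Finset.univ.filter fun j => ω j = i').card = 1 ∧
          (Finset.univ.filter fun j => ω j = i).card = 0).card
        + (Finset.univ.filter fun ω : Fin m → Fin n =>
          (Finset.univ.filter fun j => ω j = i).card = 1 ∧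
          (Finset.univ.filter fun j => ω j = i').card = 0).card
        + (Finset.univ.filter fun ω : Fin m → Fin n =>
          (Finset.univ.filter fun j => ω j = i).card = 1 ∧
          (Finset.univ.filter fun j => ω j = i').card = 1).card := by
  classical
  rw [Finset.card_filter, Finset.card_filter, Finset.card_filter, Finset.card_filter,
    Finset.card_filter, ← Finset.sum_add_distrib, ← Finset.sum_add_distrib,
    ← Finset.sum_add_distrib]
  apply Finset.sum_congr rfl
  intro ω _
  split_ifs <;> omega

lemma compl_single (i : Fin n) :
    (Finset.univ.filter fun ω : Fin m → Fin n =>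
        2 ≤ (Finset.univ.filter fun j => ω j = i).card).card
      + (Finset.univ.filter fun ω : Fin m → Fin n =>
        (Finset.univ.filter fun j => ω j = i).card ≤ 1).card = n^m := by
  classical
  rw [Finset.card_filter, Finset.card_filter, ← Finset.sum_add_distrib]
  have : ∀ ω : Fin m → Fin n, ((if 2 ≤ (Finset.univ.filter fun j => ω j = i).card then 1 else 0)
      + if (Finset.univ.filter fun j => ω j = i).card ≤ 1 then 1 else 0) = 1 := by
    intro ω; split_ifs <;> omega
  rw [Finset.sum_congr rfl (fun ω _ => this ω), Finset.sum_const, smul_eq_mul, mul_one,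
    Finset.card_univ]
  simp [Fintype.card_fun]

lemma ie_pair (i i' : Fin n) :
    (Finset.univ.filter fun ω : Fin m → Fin n =>
        2 ≤ (Finset.univ.filter fun j => ω j = i).card ∧
        2 ≤ (Finset.univ.filter fun j => ω j = i').card).card
      + (Finset.univ.filter fun ω : Fin m → Fin n =>
        (Finset.univ.filter fun j => ω j = i).card ≤ 1).card
      + (Finset.univ.filter fun ω : Fin m → Fin n =>
        (Finset.univ.filter fun j => ω j = i').card ≤ 1).card
      = n^m + (Finset.univ.filter fun ω : Fin m → Fin n =>
          (Finset.univ.filter fun j => ω j = i).card ≤ 1 ∧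
          (Finset.univ.filter fun j => ω j = i').card ≤ 1).card := by
  classical
  rw [Finset.card_filter, Finset.card_filter, Finset.card_filter, Finset.card_filter,
    ← Finset.sum_add_distrib, ← Finset.sum_add_distrib]
  have hcu : (n:ℕ)^m = ∑ _ω : Fin m → Fin n, 1 := by
    rw [Finset.sum_const, smul_eq_mul, mul_one, Finset.card_univ]
    simp [Fintype.card_fun]
  rw [hcu, ← Finset.sum_add_distrib]
  apply Finset.sum_congr rfl
  intro ω _
  split_ifs <;> omega

lemma sumT :
    (∑ ω : Fin m → Fin n,
      (Finset.univ.filter fun i : Fin n =>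
        2 ≤ (Finset.univ.filter fun j => ω j = i).card).card)
    = ∑ i : Fin n, (Finset.univ.filter fun ω : Fin m → Fin n =>
        2 ≤ (Finset.univ.filter fun j => ω j = i).card).card := by
  classical
  simp only [Finset.card_filter]
  exact Finset.sum_comm

lemma sumT2 :
    (∑ ω : Fin m → Fin n,
      ((Finset.univ.filter fun i : Fin n =>
        2 ≤ (Finset.univ.filter fun j => ω j = i).card).card)^2)
    = ∑ i : Fin n, ∑ i' : Fin n, (Finset.univ.filter fun ω : Fin m → Fin n =>
        2 ≤ (Finset.univ.filter fun j => ω j = i).card ∧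
        2 ≤ (Finset.univ.filter fun j => ω j = i').card).card := by
  classical
  have hpt : ∀ ω : Fin m → Fin n,
      ((Finset.univ.filter fun i : Fin n =>
        2 ≤ (Finset.univ.filter fun j => ω j = i).card).card)^2
      = ∑ i : Fin n, ∑ i' : Fin n,
          if (2 ≤ (Finset.univ.filter fun j => ω j = i).card ∧
              2 ≤ (Finset.univ.filter fun j => ω j = i').card) then 1 else 0 := by
    intro ω
    rw [sq, Finset.card_filter, Finset.sum_mul_sum]
    apply Finset.sum_congr rfl; intro x _
    apply Finset.sum_congr rfl; intro y _
    split_ifs <;> omega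
  rw [Finset.sum_congr rfl (fun ω _ => hpt ω), Finset.sum_comm]
  apply Finset.sum_congr rfl
  intro i _
  rw [Finset.sum_comm]
  apply Finset.sum_congr rfl
  intro i' _
  rw [Finset.card_filter]

end Stmt12Aux

-- mean bound, isolated
lemma stmt12_mean (Δ x ε : ℝ) (k : ℕ) (hΔ : 0 < Δ) (hx : 2 ≤ x)
    (hεpos : 0 < ε) (hεd : 4*ε = 1 - (1+Δ)*Real.exp (-Δ)) (hinv : 1/x ≤ ε)
    (hm : ((k:ℝ)+2) = Δ*x) :
    (1-1/x)^(k+2) + Δ*(1-1/x)^(k+1) ≤ 1 - 2*ε := by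
  have hx0 : (0:ℝ) < x := by linarith
  have hp0 : 0 < 1/x := by positivity
  have hp2 : 1/x ≤ 1/2 := by
    rw [div_le_div_iff₀ hx0 (by norm_num)]; linarith
  have hq0 : 0 ≤ 1 - 1/x := by linarith
  have hqe : 1 - 1/x ≤ Real.exp (-(1/x)) := by
    have := Real.add_one_le_exp (-(1/x)); linarith
  have hq1 : (1-1/x)^(k+1) ≤ Real.exp (-(1/x))^(k+1) := pow_le_pow_left₀ hq0 hqe (k+1)
  have hexpk : Real.exp (-(1/x))^(k+1) = Real.exp (-Δ) * Real.exp (1/x) := by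
    rw [← Real.exp_nat_mul, ← Real.exp_add]
    congr 1
    push_cast
    field_simp
    nlinarith [hm]
  have hexpinv : Real.exp (1/x) ≤ 1 + 2*(1/x) := by
    have h1 : Real.exp (1/x) = (Real.exp (-(1/x)))⁻¹ := by
      rw [Real.exp_neg, inv_inv]
    have h2 : (Real.exp (-(1/x)))⁻¹ ≤ (1 - 1/x)⁻¹ := by
      apply inv_anti₀ (by linarith) hqe
    rw [h1]
    refine h2.trans ?_
    rw [inv_le_iff_one_le_mul₀ (by linarith)]
    nlinarith
  have hq1' : (1-1/x)^(k+1) ≤ Real.exp (-Δ) * (1 + 2*(1/x)) := by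
    calc (1-1/x)^(k+1) ≤ Real.exp (-Δ) * Real.exp (1/x) := by rw [← hexpk]; exact hq1
      _ ≤ Real.exp (-Δ) * (1 + 2*(1/x)) :=
        mul_le_mul_of_nonneg_left hexpinv (Real.exp_pos _).le
  have hsplit : (1-1/x)^(k+2) + Δ*(1-1/x)^(k+1) = (1-1/x)^(k+1) * ((1-1/x) + Δ) := by ring
  rw [hsplit]
  have hbig : (1-1/x)^(k+1) * ((1-1/x) + Δ) ≤ (Real.exp (-Δ)*(1+2*(1/x))) * (1+Δ) := by
    apply mul_le_mul hq1' (by linarith) (by linarith) (by positivity)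
  refine hbig.trans ?_
  have hE : 0 < Real.exp (-Δ) := Real.exp_pos _
  nlinarith [hinv, hεpos, hE, mul_pos hΔ hE]

-- variance core, isolated
lemma stmt12_var (Δ x a b A B X : ℝ) (hΔ : 0 < Δ) (hx : 2 ≤ x)
    (ha : a = x - 1) (hb : b = x - 2)
    (hA0 : 0 ≤ A) (hB0 : 0 ≤ B) (hX0 : 0 ≤ X)
    (hBX : B*X ≤ A^2) (hAX : A ≤ X) :
    (B*b^2 + Δ*x*(B*b) + Δ*x*(B*b) + Δ*x*((Δ*x-1)*B)) * (X*x^2)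
      - (A*a^2 + Δ*x*(A*a))^2 ≤ (2*Δ + 2*Δ^2)*(X^2*x^3) := by
  have hx0 : (0:ℝ) < x := by linarith
  have ha0 : 0 ≤ a := by rw [ha]; linarith
  have hb0 : 0 ≤ b := by rw [hb]; linarith
  have hbxa : b*x ≤ a^2 := by rw [ha, hb]; nlinarith
  have hbb : b^2*x^2 ≤ a^4 := by nlinarith [mul_nonneg hb0 hx0.le]
  have h1 : B*X*(b^2*x^2) ≤ A^2*a^4 :=
    mul_le_mul hBX hbb (by positivity) (sq_nonneg A)
  have hinner : B*X*(b*x) ≤ A^2*a^2 :=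
    mul_le_mul hBX hbxa (mul_nonneg hb0 hx0.le) (sq_nonneg A)
  have h2 : 2*Δ*x^2*(B*X*(b*x)) ≤ 2*Δ*x^2*(A^2*a^2) :=
    mul_le_mul_of_nonneg_left hinner (by positivity)
  have hAaXx : A*a ≤ X*x := mul_le_mul hAX (by linarith) ha0 hX0
  have h3' : (A*a)^2 ≤ (X*x)^2 := by nlinarith [mul_nonneg hA0 ha0]
  have h3 : A^2*a^2*x ≤ X^2*x^2*x := by nlinarith [h3']
  have h4a : Δ*x*(Δ*x-1) ≤ Δ^2*x^2 := by nlinarith [mul_pos hΔ hx0]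
  have hBXx : B*X*x^2 ≤ A^2*x^2 := mul_le_mul_of_nonneg_right hBX (sq_nonneg x)
  have h4 : (Δ*x*(Δ*x-1))*(B*X*x^2) ≤ (Δ^2*x^2)*(A^2*x^2) :=
    mul_le_mul h4a hBXx (by positivity) (by positivity)
  have hA2X2 : A^2 ≤ X^2 := by nlinarith
  have h5' : A^2*(2*x-1) ≤ X^2*(2*x) :=
    mul_le_mul hA2X2 (by linarith) (by linarith) (sq_nonneg X)
  have h5 : Δ^2*x^2*(A^2*(2*x-1)) ≤ Δ^2*x^2*(X^2*(2*x)) :=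
    mul_le_mul_of_nonneg_left h5' (by positivity)
  have h6 : Δ^2*x^2*(A^2*x^2) = Δ^2*x^2*(A^2*a^2) + Δ^2*x^2*(A^2*(2*x-1)) := by
    rw [ha]; ring
  have h2d : 2*Δ*(A^2*a^2*x^2) = 2*Δ*(A^2*a^3*x) + 2*Δ*(A^2*a^2*x) := by rw [ha]; ring
  have h3d : 2*Δ*(A^2*a^2*x) ≤ 2*Δ*(X^2*x^2*x) := mul_le_mul_of_nonneg_left h3 (by positivity)
  linarith [h1, h2, h2d, h3d, h4, h5, h6]

set_option maxHeartbeats 4000000 in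
/-- For `m = Δn` balls in `n` bins, the number `T` of bins with at least two balls satisfies
`P(T < ε_Δ n) ≤ r_Δ/n` for some constants `ε_Δ, r_Δ > 0`, for `n` large enough. -/
theorem stmt12 (Δ : ℝ) (hΔ : 0 < Δ) :
    ∃ ε > (0:ℝ), ∃ r > (0:ℝ), ∃ N : ℕ, ∀ n ≥ N, ∀ m : ℕ, (m:ℝ) = Δ * n →
      ((Finset.univ.filter fun ω : Fin m → Fin n =>
          ((Finset.univ.filter fun i : Fin n =>
              2 ≤ (Finset.univ.filter fun j => ω j = i).card).card : ℝ) < ε * n).card : ℝ)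
        / (n:ℝ)^m ≤ r / n := by
  classical
  set ε : ℝ := (1 - (1+Δ)*Real.exp (-Δ))/4 with hεdef
  have hεpos : 0 < ε := by
    have h1 : 1 + Δ < Real.exp Δ := by
      have := Real.add_one_lt_exp (x := Δ) hΔ.ne'
      linarith
    have h2 : (1+Δ)*Real.exp (-Δ) < Real.exp Δ * Real.exp (-Δ) :=
      mul_lt_mul_of_pos_right h1 (Real.exp_pos _)
    rw [← Real.exp_add] at h2
    simp only [add_neg_cancel, Real.exp_zero] at h2
    rw [hεdef]
    linarith
  set C : ℝ := 1 + 2*Δ + 2*Δ^2 with hCdef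
  have hCpos : 0 < C := by rw [hCdef]; nlinarith
  refine ⟨ε, hεpos, C/ε^2, by positivity, ⌈(2:ℝ)/Δ⌉₊ + ⌈1/ε⌉₊ + 2, ?_⟩
  intro n hn m hm
  -- size facts
  have hxN : ((⌈(2:ℝ)/Δ⌉₊ + ⌈1/ε⌉₊ + 2 : ℕ) : ℝ) ≤ (n:ℝ) := by exact_mod_cast hn
  push_cast at hxN
  have hceil1 : (2:ℝ)/Δ ≤ (⌈(2:ℝ)/Δ⌉₊ : ℝ) := Nat.le_ceil _
  have hceil2 : (1:ℝ)/ε ≤ (⌈(1:ℝ)/ε⌉₊ : ℝ) := Nat.le_ceil _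
  have hceil1' : (0:ℝ) ≤ (⌈(2:ℝ)/Δ⌉₊ : ℝ) := by positivity
  have hceil2' : (0:ℝ) ≤ (⌈(1:ℝ)/ε⌉₊ : ℝ) := by positivity
  have hx2 : (2:ℝ) ≤ (n:ℝ) := by linarith
  have hx0 : (0:ℝ) < (n:ℝ) := by linarith
  have h2Δ : (2:ℝ)/Δ ≤ (n:ℝ) := by linarith
  have h1ε : (1:ℝ)/ε ≤ (n:ℝ) := by
    have : (0:ℝ) ≤ 2/Δ := by positivity
    linarith
  have hinv : 1/(n:ℝ) ≤ ε := by
    rw [div_le_iff₀ hx0]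
    rw [div_le_iff₀ hεpos] at h1ε
    linarith
  have hm2 : 2 ≤ m := by
    have : (2:ℝ) ≤ (m:ℝ) := by
      rw [hm]
      calc (2:ℝ) = Δ * (2/Δ) := by field_simp
        _ ≤ Δ * n := by
          apply mul_le_mul_of_nonneg_left h2Δ hΔ.le
    exact_mod_cast this
  obtain ⟨k, rfl⟩ : ∃ k, m = k + 2 := ⟨m - 2, by omega⟩
  have hn2 : 2 ≤ n := by exact_mod_cast hx2
  have hmr : ((k:ℝ)+2) = Δ*(n:ℝ) := by exact_mod_cast hm
  -- notation
  set x : ℝ := (n:ℝ) with hxdef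
  -- nat cast facts
  have hcast1 : ((n-1 : ℕ) : ℝ) = x - 1 := by
    have : 1 ≤ n := by omega
    push_cast [this]
    ring
  have hcast2 : ((n-2 : ℕ) : ℝ) = x - 2 := by
    push_cast [hn2]
    ring
  -- counting constants
  set Lnat : ℕ := (n-1)^(k+2) + (k+2)*(n-1)^(k+1) with hLnat
  set Pnat : ℕ := (n-2)^(k+2) + ((k+2)*(n-2)^(k+1) + (k+2)*(n-2)^(k+1)
      + (k+2)*((k+1)*(n-2)^k)) with hPnat
  set L : ℝ := (Lnat : ℝ) with hLdef
  set Pp : ℝ := (Pnat : ℝ) with hPdef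
  have hL0 : 0 ≤ L := by rw [hLdef]; positivity
  have hP0 : 0 ≤ Pp := by rw [hPdef]; positivity
  have hLcast : L = (x-1)^(k+2) + (Δ*x)*(x-1)^(k+1) := by
    rw [hLdef, hLnat]
    push_cast [hcast1]
    rw [show ((k:ℝ)+2) = Δ*x from hmr]
  have hPcast : Pp = (x-2)^(k+2) + ((Δ*x)*(x-2)^(k+1) + (Δ*x)*(x-2)^(k+1)
      + (Δ*x)*(((Δ*x)-1)*(x-2)^k)) := by
    rw [hPdef, hPnat]
    push_cast [hcast2]
    rw [show ((k:ℝ)+2) = Δ*x from hmr, show ((k:ℝ)+1) = Δ*x - 1 by linarith [hmr]]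
  -- per-bin counting identities (ℕ), then cast
  have hsub1 : k + 2 - 1 = k + 1 := by omega
  have hsub2 : k + 2 - 2 = k := by omega
  have G1 : ∀ i : Fin n,
      ((Finset.univ.filter fun ω : Fin (k+2) → Fin n =>
        2 ≤ (Finset.univ.filter fun j => ω j = i).card).card : ℝ) = x^(k+2) - L := by
    intro i
    have h0 := compl_single (m := k+2) (n := n) i
    rw [cnt_le1_split, cnt0, cnt1, hsub1] at h0
    have hc := congrArg (Nat.cast : ℕ → ℝ) h0
    push_cast at hc
    have hLc : (((n-1:ℕ):ℝ))^(k+2) + ((k:ℝ)+2)*(((n-1:ℕ):ℝ))^(k+1) = L := by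
      rw [hLdef, hLnat]; push_cast; ring
    linarith only [hc, hLc]
  have G2 : ∀ i i' : Fin n, i ≠ i' →
      ((Finset.univ.filter fun ω : Fin (k+2) → Fin n =>
        2 ≤ (Finset.univ.filter fun j => ω j = i).card ∧
        2 ≤ (Finset.univ.filter fun j => ω j = i').card).card : ℝ)
      = x^(k+2) + Pp - 2*L := by
    intro i i' hne
    have h0 := ie_pair (m := k+2) (n := n) i i'
    rw [pair_le1_split, cnt00 hne, cnt10 hne.symm, cnt10 hne, cnt11 hne,
      cnt_le1_split, cnt0, cnt1,
      cnt_le1_split, cnt0, cnt1, hsub1, hsub2] at h0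
    have hcast := congrArg (Nat.cast : ℕ → ℝ) h0
    push_cast at hcast
    have hLc : (((n-1:ℕ))^(k+2) + ((k:ℝ)+2)*((n-1:ℕ))^(k+1) : ℝ) = L := by
      rw [hLdef, hLnat]; push_cast; ring
    have hPc : (((n-2:ℕ))^(k+2) + (((k:ℝ)+2)*((n-2:ℕ))^(k+1) + ((k:ℝ)+2)*((n-2:ℕ))^(k+1)
        + ((k:ℝ)+2)*(((k:ℝ)+1)*((n-2:ℕ))^k)) : ℝ) = Pp := by
      rw [hPdef, hPnat]; push_cast; ring
    linarith only [hcast, hLc, hPc]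
  -- abbreviation for the bin-count function
  set T : (Fin (k+2) → Fin n) → ℕ := fun ω => (Finset.univ.filter fun i : Fin n =>
      2 ≤ (Finset.univ.filter fun j => ω j = i).card).card with hT
  -- first moment
  have hS1 : (∑ ω : Fin (k+2) → Fin n, (T ω : ℝ)) = x*(x^(k+2) - L) := by
    have h0 := sumT (m := k+2) (n := n)
    have hc : (∑ ω : Fin (k+2) → Fin n, (T ω : ℝ))
        = ∑ i : Fin n, ((Finset.univ.filter fun ω : Fin (k+2) → Fin n =>
            2 ≤ (Finset.univ.filter fun j => ω j = i).card).card : ℝ) := by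
      simp only [hT]
      exact_mod_cast congrArg (Nat.cast : ℕ → ℝ) h0
    rw [hc, Finset.sum_congr rfl (fun i _ => G1 i), Finset.sum_const, Finset.card_univ,
      Fintype.card_fin, nsmul_eq_mul]
  -- second moment
  have hS2 : (∑ ω : Fin (k+2) → Fin n, (T ω : ℝ)^2)
      = x*(x^(k+2)-L) + x*(x-1)*(x^(k+2)+Pp-2*L) := by
    have h0 := sumT2 (m := k+2) (n := n)
    have hc : (∑ ω : Fin (k+2) → Fin n, (T ω : ℝ)^2)
        = ∑ i : Fin n, ∑ i' : Fin n, ((Finset.univ.filter fun ω : Fin (k+2) → Fin n =>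
            2 ≤ (Finset.univ.filter fun j => ω j = i).card ∧
            2 ≤ (Finset.univ.filter fun j => ω j = i').card).card : ℝ) := by
      simp only [hT]
      exact_mod_cast congrArg (Nat.cast : ℕ → ℝ) h0
    have hinner : ∀ i : Fin n, (∑ i' : Fin n, ((Finset.univ.filter fun ω : Fin (k+2) → Fin n =>
            2 ≤ (Finset.univ.filter fun j => ω j = i).card ∧
            2 ≤ (Finset.univ.filter fun j => ω j = i').card).card : ℝ))
        = (x^(k+2)-L) + (x-1)*(x^(k+2)+Pp-2*L) := by
      intro i
      rw [← Finset.add_sum_erase _ _ (Finset.mem_univ i)]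
      congr 1
      · have hdiag : (Finset.univ.filter fun ω : Fin (k+2) → Fin n =>
              2 ≤ (Finset.univ.filter fun j => ω j = i).card ∧
              2 ≤ (Finset.univ.filter fun j => ω j = i).card)
            = Finset.univ.filter fun ω : Fin (k+2) → Fin n =>
              2 ≤ (Finset.univ.filter fun j => ω j = i).card := by
          ext ω; simp
        rw [hdiag]
        exact G1 i
      · rw [Finset.sum_congr rfl (fun i' hi' => G2 i i'
            (Ne.symm (Finset.mem_erase.mp hi').1)),
          Finset.sum_const, Finset.card_erase_of_mem (Finset.mem_univ i), Finset.card_univ,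
          Fintype.card_fin, nsmul_eq_mul, hcast1]
    rw [hc, Finset.sum_congr rfl (fun i _ => hinner i), Finset.sum_const, Finset.card_univ,
      Fintype.card_fin, nsmul_eq_mul]
    ring
  -- mean lower bound
  have hc1ge : 2*ε*x^(k+2) ≤ x^(k+2) - L := by
    have hq : x - 1 = x*(1-1/x) := by field_simp
    have hmp1 : (x-1)^(k+2) = x^(k+2)*(1-1/x)^(k+2) := by rw [hq, mul_pow]
    have hmp2 : (x-1)^(k+1) = x^(k+1)*(1-1/x)^(k+1) := by rw [hq, mul_pow]
    have hLsplit : L = x^(k+2)*((1-1/x)^(k+2) + Δ*(1-1/x)^(k+1)) := by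
      rw [hLcast, hmp1, hmp2]; ring
    have hmean := stmt12_mean Δ x ε k hΔ hx2 hεpos (by rw [hεdef]; ring) hinv hmr
    have hLle : L ≤ x^(k+2)*(1-2*ε) := by
      rw [hLsplit]
      exact mul_le_mul_of_nonneg_left hmean (pow_nonneg hx0.le _)
    linarith only [hLle]
  have hpow0 : (0:ℝ) < x^(k+2) := pow_pos hx0 _
  have hc1le : x^(k+2) - L ≤ x^(k+2) := by linarith only [hL0]
  have hcb0 : 0 ≤ x^(k+2) + Pp - 2*L := by
    have i0 : Fin n := ⟨0, by omega⟩
    have i1 : Fin n := ⟨1, by omega⟩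
    have hne : (⟨0, by omega⟩ : Fin n) ≠ (⟨1, by omega⟩ : Fin n) := by
      simp [Fin.ext_iff]
    rw [← G2 _ _ hne]
    positivity
  -- variance bound
  have hBXfact : ((x-2)^k)*(x^k) ≤ ((x-1)^k)^2 := by
    have h1 : (x-2)*x ≤ (x-1)^2 := by nlinarith
    have h2 : (0:ℝ) ≤ (x-2)*x := by nlinarith
    calc ((x-2)^k)*(x^k) = ((x-2)*x)^k := (mul_pow _ _ _).symm
      _ ≤ ((x-1)^2)^k := pow_le_pow_left₀ h2 h1 k
      _ = ((x-1)^k)^2 := by rw [← pow_mul, ← pow_mul, mul_comm]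
  have hAXfact : (x-1)^k ≤ x^k := pow_le_pow_left₀ (by linarith) (by linarith) k
  have hvar := stmt12_var Δ x (x-1) (x-2) ((x-1)^k) ((x-2)^k) (x^k) hΔ hx2 rfl rfl
      (pow_nonneg (by linarith) k) (pow_nonneg (by linarith) k) (pow_nonneg hx0.le k)
      hBXfact hAXfact
  have hvar' : Pp*x^(k+2) - L^2 ≤ (2*Δ+2*Δ^2)*((x^k)^2*x^3) := by
    have e1 : Pp*x^(k+2) = ((x-2)^k*(x-2)^2 + Δ*x*((x-2)^k*(x-2)) + Δ*x*((x-2)^k*(x-2))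
        + Δ*x*((Δ*x-1)*(x-2)^k)) * ((x^k)*x^2) := by
      rw [hPcast]; ring
    have e2 : L^2 = ((x-1)^k*(x-1)^2 + Δ*x*((x-1)^k*(x-1)))^2 := by
      rw [hLcast]; ring
    rw [e1, e2]
    linarith only [hvar]
  -- Chebyshev
  set Ev : Finset (Fin (k+2) → Fin n) :=
    Finset.univ.filter (fun ω : Fin (k+2) → Fin n => ((T ω : ℕ) : ℝ) < ε * x) with hEv
  have hS1ge : 2*ε*x*x^(k+2) ≤ x*(x^(k+2)-L) := by
    have := mul_le_mul_of_nonneg_left hc1ge hx0.le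
    linarith only [this]
  have cheb_pt : ∀ ω ∈ Ev, (ε*x*x^(k+2))^2 ≤ (x^(k+2)*(T ω:ℝ) - x*(x^(k+2)-L))^2 := by
    intro ω hω
    have hTlt : ((T ω : ℕ) : ℝ) < ε*x := (Finset.mem_filter.mp hω).2
    have h1 : x^(k+2)*(T ω:ℝ) < x^(k+2)*(ε*x) := by
      exact mul_lt_mul_of_pos_left hTlt hpow0
    have h2 : ε*x*x^(k+2) ≤ x*(x^(k+2)-L) - x^(k+2)*(T ω:ℝ) := by linarith only [hS1ge, h1]
    have h3 : (0:ℝ) ≤ ε*x*x^(k+2) := by positivity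
    have h4 := pow_le_pow_left₀ h3 h2 2
    calc (ε*x*x^(k+2))^2 ≤ (x*(x^(k+2)-L) - x^(k+2)*(T ω:ℝ))^2 := h4
      _ = (x^(k+2)*(T ω:ℝ) - x*(x^(k+2)-L))^2 := by ring
  have cheb_sum : ((Ev.card : ℕ) : ℝ)*(ε*x*x^(k+2))^2
      ≤ ∑ ω : Fin (k+2) → Fin n, (x^(k+2)*(T ω:ℝ) - x*(x^(k+2)-L))^2 := by
    calc ((Ev.card : ℕ) : ℝ)*(ε*x*x^(k+2))^2
        = ∑ _ω ∈ Ev, (ε*x*x^(k+2))^2 := by rw [Finset.sum_const, nsmul_eq_mul]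
      _ ≤ ∑ ω ∈ Ev, (x^(k+2)*(T ω:ℝ) - x*(x^(k+2)-L))^2 := Finset.sum_le_sum cheb_pt
      _ ≤ ∑ ω : Fin (k+2) → Fin n, (x^(k+2)*(T ω:ℝ) - x*(x^(k+2)-L))^2 :=
          Finset.sum_le_sum_of_subset_of_nonneg (Finset.subset_univ _)
            (fun ω _ _ => sq_nonneg _)
  have card_univ_cast : (((Finset.univ : Finset (Fin (k+2) → Fin n)).card : ℕ) : ℝ)
      = x^(k+2) := by
    rw [Finset.card_univ]
    rw [show Fintype.card (Fin (k+2) → Fin n) = n^(k+2) by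
      simp [Fintype.card_fun]]
    push_cast
    rfl
  have expand_sum : (∑ ω : Fin (k+2) → Fin n, (x^(k+2)*(T ω:ℝ) - x*(x^(k+2)-L))^2)
      = x^(k+2)*x^(k+2)*(∑ ω : Fin (k+2) → Fin n, (T ω:ℝ)^2)
        - 2*x^(k+2)*(x*(x^(k+2)-L))*(∑ ω : Fin (k+2) → Fin n, (T ω:ℝ))
        + x^(k+2)*(x*(x^(k+2)-L))^2 := by
    have hexp : ∀ ω : Fin (k+2) → Fin n, (x^(k+2)*(T ω:ℝ) - x*(x^(k+2)-L))^2
        = x^(k+2)*x^(k+2)*(T ω:ℝ)^2 - 2*x^(k+2)*(x*(x^(k+2)-L))*(T ω:ℝ)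
          + (x*(x^(k+2)-L))^2 := fun ω => by ring
    rw [Finset.sum_congr rfl (fun ω _ => hexp ω), Finset.sum_add_distrib,
      Finset.sum_sub_distrib, ← Finset.mul_sum, ← Finset.mul_sum, Finset.sum_const,
      nsmul_eq_mul, card_univ_cast]
  have main1 : ((Ev.card : ℕ) : ℝ)*(ε*x*x^(k+2))^2
      ≤ x^(k+2)*(x^(k+2)*(x*(x^(k+2)-L) + x*(x-1)*(x^(k+2)+Pp-2*L))
          - (x*(x^(k+2)-L))^2) := by
    have h := cheb_sum
    rw [expand_sum, hS1, hS2] at h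
    linarith only [h]
  have main2 : x^(k+2)*(x*(x^(k+2)-L) + x*(x-1)*(x^(k+2)+Pp-2*L)) - (x*(x^(k+2)-L))^2
      ≤ C*x^(k+2)*x^(k+2)*x := by
    have k1 : x^(k+2)*(x*(x^(k+2)-L)) ≤ x^(k+2)*(x*x^(k+2)) := by
      have h := mul_le_mul_of_nonneg_left hc1le hx0.le
      exact mul_le_mul_of_nonneg_left h hpow0.le
    have k2i : x*(x-1)*(x^(k+2)+Pp-2*L) ≤ x*x*(x^(k+2)+Pp-2*L) := by
      apply mul_le_mul_of_nonneg_right _ hcb0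
      linarith only [hx0]
    have k2 : x^(k+2)*(x*(x-1)*(x^(k+2)+Pp-2*L)) ≤ x^(k+2)*(x*x*(x^(k+2)+Pp-2*L)) :=
      mul_le_mul_of_nonneg_left k2i hpow0.le
    have k3 : x^(k+2)*(x*x*(x^(k+2)+Pp-2*L)) - (x*(x^(k+2)-L))^2
        = x*x*(Pp*x^(k+2) - L^2) := by ring
    have k4 : x*x*(Pp*x^(k+2) - L^2) ≤ x*x*((2*Δ+2*Δ^2)*((x^k)^2*x^3)) :=
      mul_le_mul_of_nonneg_left hvar' (by positivity)
    have k5 : x*x*((2*Δ+2*Δ^2)*((x^k)^2*x^3)) = (2*Δ+2*Δ^2)*(x^(k+2)*x^(k+2)*x) := by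
      ring
    have k6 : x^(k+2)*(x*x^(k+2)) = x^(k+2)*x^(k+2)*x := by ring
    have hCfact : C*x^(k+2)*x^(k+2)*x
        = x^(k+2)*x^(k+2)*x + (2*Δ+2*Δ^2)*(x^(k+2)*x^(k+2)*x) := by
      rw [hCdef]; ring
    linarith only [k1, k2, k3, k4, k5, k6, hCfact]
  have main3 : ((Ev.card : ℕ) : ℝ)*(ε*x*x^(k+2))^2 ≤ x^(k+2)*(C*x^(k+2)*x^(k+2)*x) :=
    main1.trans (mul_le_mul_of_nonneg_left main2 hpow0.le)
  have hfin : ((Ev.card : ℕ) : ℝ)*ε^2*x ≤ C*x^(k+2) := by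
    have hpos : (0:ℝ) < x*x^(k+2)*x^(k+2) := by positivity
    refine le_of_mul_le_mul_right ?_ hpos
    calc ((Ev.card : ℕ) : ℝ)*ε^2*x*(x*x^(k+2)*x^(k+2))
        = ((Ev.card : ℕ) : ℝ)*(ε*x*x^(k+2))^2 := by ring
      _ ≤ x^(k+2)*(C*x^(k+2)*x^(k+2)*x) := main3
      _ = C*x^(k+2)*(x*x^(k+2)*x^(k+2)) := by ring
  rw [div_le_div_iff₀ hpow0 hx0, div_mul_eq_mul_div, le_div_iff₀ (by positivity : (0:ℝ) < ε^2)]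
  linarith only [hfin]
end

section
/- Place m = ⌈C√n⌉ balls independently and uniformly at random into n bins with C > 0. Let T be the number of bins receiving at least two balls. Then for all n large enough, P(T < C^2/4) ≤ 576/C^2. -/
set_option maxHeartbeats 1000000

open Finset
open scoped Classical

lemma card_fixed (m n : ℕ) (s : Finset (Fin m)) (g : Fin m → Fin n) :
    (Finset.univ.filter fun ω : Fin m → Fin n => ∀ i ∈ s, ω i = g i).card
      = n ^ (m - s.card) := by
  rw [← Fintype.card_subtype]
  have e : {ω : Fin m → Fin n // ∀ i ∈ s, ω i = g i} ≃ ({i : Fin m // i ∉ s} → Fin n) :=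
    { toFun := fun ω i => ω.1 i.1
      invFun := fun f => ⟨fun i => if h : i ∈ s then g i else f ⟨i, h⟩,
        fun i hi => by simp [hi]⟩
      left_inv := fun ω => by
        ext i
        by_cases h : i ∈ s <;> simp [h, ω.2 i]
      right_inv := fun f => by
        ext i
        simp [i.2] }
  have h2 : Fintype.card {i : Fin m // i ∉ s} = m - s.card := by
    simpa using Fintype.card_subtype_compl (fun i : Fin m => i ∈ s)
  rw [Fintype.card_congr e, Fintype.card_fun, h2, Fintype.card_fin]

lemma card_le_fixed (m n : ℕ) (s : Finset (Fin m)) (g : Fin m → Fin n)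
    (P : (Fin m → Fin n) → Prop) [DecidablePred P] (h : ∀ ω, P ω → ∀ i ∈ s, ω i = g i) :
    (Finset.univ.filter fun ω : Fin m → Fin n => P ω).card ≤ n ^ (m - s.card) := by
  rw [← card_fixed m n s g]
  exact Finset.card_le_card (fun ω hω => by
    simp only [mem_filter, mem_univ, true_and] at *
    exact h ω hω)

lemma card_le_fibers {α β : Type*} [Fintype β] [DecidableEq β] (s : Finset α) (f : α → β)
    (B : ℕ) (h : ∀ b : β, (s.filter fun a => f a = b).card ≤ B) :
    s.card ≤ Fintype.card β * B := by
  rw [Finset.card_eq_sum_card_fiberwise (fun x _ => Finset.mem_univ (f x))]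
  calc ∑ b ∈ univ, (s.filter fun a => f a = b).card ≤ ∑ _b ∈ (univ : Finset β), B :=
        Finset.sum_le_sum fun b _ => h b
    _ = Fintype.card β * B := by simp [mul_comm]

lemma card_triple_le (m n : ℕ) (j k l : Fin m) (hjk : j ≠ k) (hjl : j ≠ l) (hkl : k ≠ l) :
    (Finset.univ.filter fun ω : Fin m → Fin n => ω j = ω k ∧ ω k = ω l).card
      ≤ n ^ (m - 2) := by
  have hS : ({j, k, l} : Finset (Fin m)).card = 3 := by
    rw [Finset.card_insert_of_notMem (by simp [hjk, hjl]), Finset.card_pair hkl]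
  have hm : 3 ≤ m := by
    have := Finset.card_le_univ ({j, k, l} : Finset (Fin m))
    simp only [hS, Finset.card_univ, Fintype.card_fin] at this
    exact this
  have key : (Finset.univ.filter fun ω : Fin m → Fin n => ω j = ω k ∧ ω k = ω l).card
      ≤ Fintype.card (Fin n) * n ^ (m - 3) := by
    apply card_le_fibers _ (fun ω => ω j)
    intro v
    rw [Finset.filter_filter]
    have := card_le_fixed m n ({j, k, l} : Finset (Fin m)) (fun _ => v)
      (fun ω => (ω j = ω k ∧ ω k = ω l) ∧ ω j = v) ?_
    · rw [hS] at this; exact this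
    rintro ω ⟨⟨h1, h2⟩, h3⟩ i hi
    simp only [Finset.mem_insert, Finset.mem_singleton] at hi
    rcases hi with rfl | rfl | rfl
    · exact h3
    · rw [← h1]; exact h3
    · rw [← h2, ← h1]; exact h3
  refine le_trans key (le_of_eq ?_)
  rw [Fintype.card_fin]
  have h4 : m - 2 = (m - 3) + 1 := by clear key; omega
  rw [h4, pow_succ]
  ring

lemma card_twopairs_le (m n : ℕ) (j k j' k' : Fin m) (hjk : j ≠ k) (hj'k' : j' ≠ k')
    (h1 : (j', k') ≠ (j, k)) (h2 : (j', k') ≠ (k, j)) :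
    (Finset.univ.filter fun ω : Fin m → Fin n => ω j = ω k ∧ ω j' = ω k').card
      ≤ n ^ (m - 2) := by
  by_cases hdisj : Disjoint ({j, k} : Finset (Fin m)) ({j', k'} : Finset (Fin m))
  · -- four distinct indices
    have hjj' : j ≠ j' := fun h => Finset.disjoint_left.1 hdisj (show j ∈ ({j,k}:Finset (Fin m)) by simp) (show j ∈ ({j',k'}:Finset (Fin m)) by simp [h])
    have hjk' : j ≠ k' := fun h => Finset.disjoint_left.1 hdisj (show j ∈ ({j,k}:Finset (Fin m)) by simp) (show j ∈ ({j',k'}:Finset (Fin m)) by simp [h])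
    have hkj' : k ≠ j' := fun h => Finset.disjoint_left.1 hdisj (show k ∈ ({j,k}:Finset (Fin m)) by simp) (show k ∈ ({j',k'}:Finset (Fin m)) by simp [h])
    have hkk' : k ≠ k' := fun h => Finset.disjoint_left.1 hdisj (show k ∈ ({j,k}:Finset (Fin m)) by simp) (show k ∈ ({j',k'}:Finset (Fin m)) by simp [h])
    have hS : ({j, k, j', k'} : Finset (Fin m)).card = 4 := by
      rw [Finset.card_insert_of_notMem (by simp [hjk, hjj', hjk']),
        Finset.card_insert_of_notMem (by simp [hkj', hkk']), Finset.card_pair hj'k']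
    have hm : 4 ≤ m := by
      have := Finset.card_le_univ ({j, k, j', k'} : Finset (Fin m))
      simp only [hS, Finset.card_univ, Fintype.card_fin] at this
      exact this
    have key : (Finset.univ.filter fun ω : Fin m → Fin n => ω j = ω k ∧ ω j' = ω k').card
        ≤ Fintype.card (Fin n × Fin n) * n ^ (m - 4) := by
      apply card_le_fibers _ (fun ω => (ω j, ω j'))
      rintro ⟨v, w⟩
      rw [Finset.filter_filter]
      have := card_le_fixed m n ({j, k, j', k'} : Finset (Fin m))
        (fun i => if i = j' ∨ i = k' then w else v)
        (fun ω => (ω j = ω k ∧ ω j' = ω k') ∧ (ω j, ω j') = (v, w)) ?_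
      · rw [hS] at this; exact this
      rintro ω ⟨⟨h3, h4⟩, h5⟩ i hi
      have hv : ω j = v := (Prod.mk.injEq _ _ _ _ ▸ h5).1
      have hw : ω j' = w := (Prod.mk.injEq _ _ _ _ ▸ h5).2
      simp only [Finset.mem_insert, Finset.mem_singleton] at hi
      rcases hi with rfl | rfl | rfl | rfl
      · simp [hjj', hjk', hv]
      · simp [hkj', hkk', ← h3, hv]
      · simp [hw]
      · simp [← h4, hw]
    refine le_trans key (le_of_eq ?_)
    rw [Fintype.card_prod, Fintype.card_fin]
    have h4 : m - 2 = (m - 4) + 1 + 1 := by clear key; omega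
    rw [h4, pow_succ, pow_succ]
    ring
  · -- shared vertex
    obtain ⟨x, hx1, hx2⟩ := Finset.not_disjoint_iff.1 hdisj
    -- find e ∈ {j',k'} with e ∉ {j,k}
    have hne : ¬ (({j', k'} : Finset (Fin m)) ⊆ ({j, k} : Finset (Fin m))) := by
      intro hsub
      have := Finset.eq_of_subset_of_card_le hsub
        (by rw [Finset.card_pair hjk, Finset.card_pair hj'k'])
      have hj'm : j' ∈ ({j, k} : Finset (Fin m)) := this ▸ (by simp)
      have hk'm : k' ∈ ({j, k} : Finset (Fin m)) := this ▸ (by simp)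
      simp only [Finset.mem_insert, Finset.mem_singleton] at hj'm hk'm
      rcases hj'm with rfl | rfl <;> rcases hk'm with rfl | rfl
      · exact hj'k' rfl
      · exact h1 rfl
      · exact h2 rfl
      · exact hj'k' rfl
    obtain ⟨e, he1, he2⟩ := Finset.not_subset.1 hne
    have hej : e ≠ j := fun h => he2 (by simp [h])
    have hek : e ≠ k := fun h => he2 (by simp [h])
    have hS : ({j, k, e} : Finset (Fin m)).card = 3 := by
      rw [Finset.card_insert_of_notMem (by simp [hjk, Ne.symm hej]),
        Finset.card_pair (Ne.symm hek)]
    have hm : 3 ≤ m := by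
      have := Finset.card_le_univ ({j, k, e} : Finset (Fin m))
      simp only [hS, Finset.card_univ, Fintype.card_fin] at this
      exact this
    have key : (Finset.univ.filter fun ω : Fin m → Fin n => ω j = ω k ∧ ω j' = ω k').card
        ≤ Fintype.card (Fin n) * n ^ (m - 3) := by
      apply card_le_fibers _ (fun ω => ω j)
      intro v
      rw [Finset.filter_filter]
      have := card_le_fixed m n ({j, k, e} : Finset (Fin m)) (fun _ => v)
        (fun ω => (ω j = ω k ∧ ω j' = ω k') ∧ ω j = v) ?_
      · rw [hS] at this; exact this
      rintro ω ⟨⟨h3, h4⟩, h5⟩ i hi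
      have hxv : ω x = v := by
        simp only [Finset.mem_insert, Finset.mem_singleton] at hx1
        rcases hx1 with rfl | rfl
        · exact h5
        · rw [← h3]; exact h5
      have hj'v : ω j' = v := by
        simp only [Finset.mem_insert, Finset.mem_singleton] at hx2
        rcases hx2 with rfl | rfl
        · exact hxv
        · rw [h4]; exact hxv
      have hev : ω e = v := by
        simp only [Finset.mem_insert, Finset.mem_singleton] at he1
        rcases he1 with rfl | rfl
        · exact hj'v
        · rw [← h4]; exact hj'v
      simp only [Finset.mem_insert, Finset.mem_singleton] at hi
      rcases hi with rfl | rfl | rfl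
      · exact h5
      · rw [← h3]; exact h5
      · exact hev
    refine le_trans key (le_of_eq ?_)
    rw [Fintype.card_fin]
    have h4 : m - 2 = (m - 3) + 1 := by clear key; omega
    rw [h4, pow_succ]
    ring

lemma card_pair (m n : ℕ) (j k : Fin m) (hjk : j ≠ k) :
    (Finset.univ.filter fun ω : Fin m → Fin n => ω j = ω k).card = n ^ (m - 1) := by
  have hm : 2 ≤ m := by
    have := hjk; have : 1 < m := by
      rcases Nat.lt_or_ge m 2 with h | h
      · interval_cases m
        · exact absurd j.2 (by omega)
        · exact absurd (Fin.ext_iff.2 (by omega : (j:ℕ) = (k:ℕ))) hjk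
      · omega
    omega
  rw [Finset.card_eq_sum_card_fiberwise
    (f := fun ω : Fin m → Fin n => ω j) (t := univ) (fun x _ => Finset.mem_univ _)]
  have key : ∀ v : Fin n,
      ((Finset.univ.filter fun ω : Fin m → Fin n => ω j = ω k).filter
        fun ω => ω j = v).card = n ^ (m - 2) := by
    intro v
    have : ((Finset.univ.filter fun ω : Fin m → Fin n => ω j = ω k).filter
        fun ω => ω j = v)
        = Finset.univ.filter fun ω : Fin m → Fin n =>
            ∀ i ∈ ({j, k} : Finset (Fin m)), ω i = (fun _ => v) i := by
      ext ω
      simp only [Finset.mem_filter, Finset.mem_univ, true_and, Finset.mem_insert,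
        Finset.mem_singleton]
      constructor
      · rintro ⟨h1, h2⟩ i hi
        rcases hi with rfl | rfl
        · exact h2
        · rw [← h1]; exact h2
      · intro h
        exact ⟨(h j (Or.inl rfl)).trans (h k (Or.inr rfl)).symm, h j (Or.inl rfl)⟩
    rw [this, card_fixed]
    congr 1
    rw [Finset.card_pair hjk]
  rw [Finset.sum_congr rfl fun v _ => key v]
  simp only [Finset.sum_const, Finset.card_univ, Fintype.card_fin, smul_eq_mul]
  rw [← pow_succ']
  congr 1
  omega

section defs
variable (m n : ℕ)

noncomputable def pcard (ω : Fin m → Fin n) : ℕ :=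
  (((Finset.univ : Finset (Fin m)).offDiag).filter fun e => ω e.1 = ω e.2).card

noncomputable def Tcard (ω : Fin m → Fin n) : ℕ :=
  (Finset.univ.filter fun i : Fin n =>
    2 ≤ (Finset.univ.filter fun j => ω j = i).card).card

noncomputable def qcard (ω : Fin m → Fin n) : ℕ :=
  ((Finset.univ : Finset ((Fin m × Fin m) × Fin m)).filter fun t =>
    (t.1.1 ≠ t.1.2 ∧ t.1.1 ≠ t.2 ∧ t.1.2 ≠ t.2) ∧ ω t.1.1 = ω t.1.2 ∧ ω t.1.2 = ω t.2).card

end defs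

lemma pointwise_s13 (m n : ℕ) (ω : Fin m → Fin n) :
    pcard m n ω ≤ 2 * Tcard m n ω + qcard m n ω := by
  classical
  set fib : Fin n → Finset (Fin m) := fun i => Finset.univ.filter fun j => ω j = i with hfib
  -- p decomposes over bins
  have hp : pcard m n ω = ∑ i : Fin n, ((fib i).offDiag).card := by
    rw [pcard, Finset.card_eq_sum_card_fiberwise
      (f := fun e : Fin m × Fin m => ω e.1) (t := (Finset.univ : Finset (Fin n)))
      (fun x _ => Finset.mem_univ _)]
    refine Finset.sum_congr rfl fun i _ => ?_
    congr 1
    ext e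
    simp only [Finset.mem_filter, Finset.mem_offDiag, Finset.mem_univ, true_and, hfib]
    constructor
    · rintro ⟨⟨hne, heq⟩, hv⟩
      exact ⟨hv, by rw [← heq]; exact hv, hne⟩
    · rintro ⟨h1, h2, hne⟩
      exact ⟨⟨hne, h1.trans h2.symm⟩, h1⟩
  have hT : Tcard m n ω = ∑ i : Fin n, (if 2 ≤ (fib i).card then 1 else 0) := by
    rw [Tcard, Finset.card_filter]
  have hq : qcard m n ω = ∑ i : Fin n,
      (((Finset.univ : Finset ((Fin m × Fin m) × Fin m)).filter fun t =>
        ((t.1.1 ≠ t.1.2 ∧ t.1.1 ≠ t.2 ∧ t.1.2 ≠ t.2) ∧ ω t.1.1 = ω t.1.2 ∧ ω t.1.2 = ω t.2)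
        ∧ ω t.1.1 = i).card) := by
    rw [qcard, Finset.card_eq_sum_card_fiberwise
      (f := fun t : (Fin m × Fin m) × Fin m => ω t.1.1) (t := (Finset.univ : Finset (Fin n)))
      (fun x _ => Finset.mem_univ _)]
    refine Finset.sum_congr rfl fun i _ => ?_
    rw [Finset.filter_filter]
  rw [hp, hT, hq, Finset.mul_sum, ← Finset.sum_add_distrib]
  refine Finset.sum_le_sum fun i _ => ?_
  set b := (fib i).card with hb
  rw [Finset.offDiag_card, ← hb]
  by_cases hb1 : b ≤ 1
  · have h0 : b * b - b = 0 := by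
      rcases (by omega : b = 0 ∨ b = 1) with h | h <;> rw [h]
    rw [h0]
    exact Nat.zero_le _
  push_neg at hb1
  have hTi : (if 2 ≤ b then 1 else 0) = 1 := if_pos hb1
  by_cases hb2 : b = 2
  · rw [hTi, hb2]
    simpa using Nat.le_add_right 2 _
  · -- b ≥ 3 : inject offDiag into triples
    rw [hTi]
    have key : (fib i).offDiag.card ≤
        ((Finset.univ : Finset ((Fin m × Fin m) × Fin m)).filter fun t =>
          ((t.1.1 ≠ t.1.2 ∧ t.1.1 ≠ t.2 ∧ t.1.2 ≠ t.2) ∧ ω t.1.1 = ω t.1.2 ∧ ω t.1.2 = ω t.2)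
          ∧ ω t.1.1 = i).card := by
      set pick : Fin m × Fin m → Fin m := fun e =>
        if h : ((fib i) \ {e.1, e.2}).Nonempty then ((fib i) \ {e.1, e.2}).min' h else e.1
        with hpick
      apply Finset.card_le_card_of_injOn (fun e => (e, pick e))
      · intro e he
        rw [Finset.mem_coe, Finset.mem_offDiag] at he
        obtain ⟨he1, he2, hne⟩ := he
        have hnonempty : ((fib i) \ {e.1, e.2}).Nonempty := by
          rw [← Finset.card_pos]
          have h1 : ({e.1, e.2} : Finset (Fin m)).card ≤ 2 :=
            (Finset.card_insert_le _ _).trans (by simp)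
          have h2 : b - 2 ≤ ((fib i) \ {e.1, e.2}).card := by
            calc b - 2 ≤ b - ({e.1, e.2} : Finset (Fin m)).card := by omega
              _ ≤ _ := Finset.le_card_sdiff _ _
          omega
        have hpe : pick e ∈ (fib i) \ {e.1, e.2} := by
          rw [hpick]; simp only [dif_pos hnonempty]; exact Finset.min'_mem _ _
        rw [Finset.mem_sdiff, Finset.mem_insert, Finset.mem_singleton] at hpe
        push_neg at hpe
        obtain ⟨hpf, hp1, hp2⟩ := hpe
        have hv1 : ω e.1 = i := by simpa [hfib] using he1
        have hv2 : ω e.2 = i := by simpa [hfib] using he2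
        have hv3 : ω (pick e) = i := by simpa [hfib] using hpf
        simp only [Finset.mem_coe, Finset.mem_filter, Finset.mem_univ, true_and]
        exact ⟨⟨⟨hne, Ne.symm hp1, Ne.symm hp2⟩, hv1.trans hv2.symm, hv2.trans hv3.symm⟩, hv1⟩
      · intro e _ e' _ h
        exact (Prod.mk.injEq _ _ _ _ ▸ h).1
    have key2 : b * b - b ≤ _ := le_of_eq_of_le (by rw [hb, ← Finset.offDiag_card]) key
    exact key2.trans (Nat.le_add_left _ _)

lemma sum_p (m n : ℕ) :
    ∑ ω : Fin m → Fin n, pcard m n ω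
      = ((Finset.univ : Finset (Fin m)).offDiag).card * n ^ (m - 1) := by
  classical
  have h1 : ∀ ω : Fin m → Fin n, pcard m n ω
      = ∑ e ∈ ((Finset.univ : Finset (Fin m)).offDiag),
          (if ω e.1 = ω e.2 then 1 else 0) := fun ω => by
    rw [pcard, Finset.card_filter]
  rw [Finset.sum_congr rfl fun ω _ => h1 ω, Finset.sum_comm]
  have h2 : ∀ e ∈ ((Finset.univ : Finset (Fin m)).offDiag),
      (∑ ω : Fin m → Fin n, if ω e.1 = ω e.2 then 1 else 0) = n ^ (m - 1) := by
    intro e he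
    rw [Finset.mem_offDiag] at he
    rw [← Finset.card_filter]
    exact card_pair m n e.1 e.2 he.2.2
  rw [Finset.sum_congr rfl h2, Finset.sum_const, smul_eq_mul]

lemma sum_q (m n : ℕ) :
    ∑ ω : Fin m → Fin n, qcard m n ω ≤ m * m * m * n ^ (m - 2) := by
  classical
  have h1 : ∀ ω : Fin m → Fin n, qcard m n ω
      = ∑ t ∈ (Finset.univ : Finset ((Fin m × Fin m) × Fin m)),
          (if (t.1.1 ≠ t.1.2 ∧ t.1.1 ≠ t.2 ∧ t.1.2 ≠ t.2)
              ∧ ω t.1.1 = ω t.1.2 ∧ ω t.1.2 = ω t.2 then 1 else 0) := fun ω => by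
    rw [qcard, Finset.card_filter]
  rw [Finset.sum_congr rfl fun ω _ => h1 ω, Finset.sum_comm]
  have h2 : ∀ t ∈ (Finset.univ : Finset ((Fin m × Fin m) × Fin m)),
      (∑ ω : Fin m → Fin n, if (t.1.1 ≠ t.1.2 ∧ t.1.1 ≠ t.2 ∧ t.1.2 ≠ t.2)
          ∧ ω t.1.1 = ω t.1.2 ∧ ω t.1.2 = ω t.2 then 1 else 0) ≤ n ^ (m - 2) := by
    intro t _
    rw [← Finset.card_filter]
    by_cases hd : t.1.1 ≠ t.1.2 ∧ t.1.1 ≠ t.2 ∧ t.1.2 ≠ t.2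
    · have : (Finset.univ.filter fun ω : Fin m → Fin n =>
          (t.1.1 ≠ t.1.2 ∧ t.1.1 ≠ t.2 ∧ t.1.2 ≠ t.2)
          ∧ ω t.1.1 = ω t.1.2 ∧ ω t.1.2 = ω t.2)
          = Finset.univ.filter fun ω : Fin m → Fin n =>
              ω t.1.1 = ω t.1.2 ∧ ω t.1.2 = ω t.2 := by
        apply Finset.filter_congr
        intro ω _
        tauto
      rw [this]
      exact card_triple_le m n t.1.1 t.1.2 t.2 hd.1 hd.2.1 hd.2.2
    · have : (Finset.univ.filter fun ω : Fin m → Fin n =>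
          (t.1.1 ≠ t.1.2 ∧ t.1.1 ≠ t.2 ∧ t.1.2 ≠ t.2)
          ∧ ω t.1.1 = ω t.1.2 ∧ ω t.1.2 = ω t.2) = ∅ :=
        Finset.filter_false_of_mem (fun ω _ => fun h => hd h.1)
      rw [this]
      simp
  calc _ ≤ ∑ _t ∈ (Finset.univ : Finset ((Fin m × Fin m) × Fin m)), n ^ (m - 2) :=
        Finset.sum_le_sum h2
    _ = m * m * m * n ^ (m - 2) := by
        rw [Finset.sum_const, smul_eq_mul, Finset.card_univ]
        simp [Fintype.card_prod, mul_assoc]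

lemma sum_p_sq (m n : ℕ) :
    ∑ ω : Fin m → Fin n, (pcard m n ω) * (pcard m n ω)
      ≤ 2 * ((Finset.univ : Finset (Fin m)).offDiag).card * n ^ (m - 1)
        + ((Finset.univ : Finset (Fin m)).offDiag).card
          * ((Finset.univ : Finset (Fin m)).offDiag).card * n ^ (m - 2) := by
  classical
  set D := ((Finset.univ : Finset (Fin m)).offDiag) with hD
  have h1 : ∀ ω : Fin m → Fin n, pcard m n ω * pcard m n ω
      = ∑ e ∈ D, ∑ e' ∈ D,
          (if ω e.1 = ω e.2 ∧ ω e'.1 = ω e'.2 then 1 else 0) := by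
    intro ω
    rw [pcard, Finset.card_filter, Finset.sum_mul_sum]
    refine Finset.sum_congr rfl fun e _ => Finset.sum_congr rfl fun e' _ => ?_
    by_cases h : ω e.1 = ω e.2 <;> by_cases h' : ω e'.1 = ω e'.2 <;> simp [h, h']
  rw [Finset.sum_congr rfl fun ω _ => h1 ω, Finset.sum_comm]
  have key : ∀ e ∈ D, (∑ ω : Fin m → Fin n, ∑ e' ∈ D,
      (if ω e.1 = ω e.2 ∧ ω e'.1 = ω e'.2 then 1 else 0))
      ≤ 2 * n ^ (m - 1) + D.card * n ^ (m - 2) := by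
    intro e he
    rw [Finset.sum_comm]
    have hee : e.1 ≠ e.2 := (Finset.mem_offDiag.1 he).2.2
    have inner : ∀ e' ∈ D, (∑ ω : Fin m → Fin n,
        (if ω e.1 = ω e.2 ∧ ω e'.1 = ω e'.2 then 1 else 0))
        = (Finset.univ.filter fun ω : Fin m → Fin n =>
            ω e.1 = ω e.2 ∧ ω e'.1 = ω e'.2).card := fun e' _ => (Finset.card_filter _ _).symm
    rw [Finset.sum_congr rfl inner]
    rw [← Finset.sum_filter_add_sum_filter_not D (fun e' => e' = e ∨ e' = Prod.swap e)]
    have part1 : ∑ e' ∈ D.filter (fun e' => e' = e ∨ e' = Prod.swap e),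
        (Finset.univ.filter fun ω : Fin m → Fin n =>
          ω e.1 = ω e.2 ∧ ω e'.1 = ω e'.2).card ≤ 2 * n ^ (m - 1) := by
      have hcard : (D.filter (fun e' => e' = e ∨ e' = Prod.swap e)).card ≤ 2 := by
        calc (D.filter (fun e' => e' = e ∨ e' = Prod.swap e)).card
            ≤ ({e, Prod.swap e} : Finset (Fin m × Fin m)).card := by
              apply Finset.card_le_card
              intro x hx
              simp only [Finset.mem_filter] at hx
              simp only [Finset.mem_insert, Finset.mem_singleton]
              exact hx.2
          _ ≤ 2 := (Finset.card_insert_le _ _).trans (by simp)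
      calc _ ≤ ∑ _e' ∈ D.filter (fun e' => e' = e ∨ e' = Prod.swap e), n ^ (m - 1) := by
            apply Finset.sum_le_sum
            intro e' _
            calc (Finset.univ.filter fun ω : Fin m → Fin n =>
                  ω e.1 = ω e.2 ∧ ω e'.1 = ω e'.2).card
                ≤ (Finset.univ.filter fun ω : Fin m → Fin n => ω e.1 = ω e.2).card := by
                  apply Finset.card_le_card
                  intro ω hω
                  simp only [Finset.mem_filter] at *
                  exact ⟨hω.1, hω.2.1⟩
              _ = n ^ (m - 1) := card_pair m n e.1 e.2 hee
        _ = (D.filter (fun e' => e' = e ∨ e' = Prod.swap e)).card * n ^ (m - 1) := by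
            rw [Finset.sum_const, smul_eq_mul]
        _ ≤ 2 * n ^ (m - 1) := Nat.mul_le_mul_right _ hcard
    have part2 : ∑ e' ∈ D.filter (fun e' => ¬(e' = e ∨ e' = Prod.swap e)),
        (Finset.univ.filter fun ω : Fin m → Fin n =>
          ω e.1 = ω e.2 ∧ ω e'.1 = ω e'.2).card ≤ D.card * n ^ (m - 2) := by
      calc _ ≤ ∑ _e' ∈ D.filter (fun e' => ¬(e' = e ∨ e' = Prod.swap e)), n ^ (m - 2) := by
            apply Finset.sum_le_sum
            intro e' he'
            simp only [Finset.mem_filter, not_or] at he'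
            obtain ⟨he'D, hne1, hne2⟩ := he'
            have he'e : e'.1 ≠ e'.2 := (Finset.mem_offDiag.1 he'D).2.2
            apply card_twopairs_le m n e.1 e.2 e'.1 e'.2 hee he'e
            · intro h
              apply hne1
              exact Prod.ext_iff.2 ⟨congrArg Prod.fst h, congrArg Prod.snd h⟩
            · intro h
              apply hne2
              rw [Prod.ext_iff] at h ⊢
              exact ⟨h.1, h.2⟩
        _ = (D.filter (fun e' => ¬(e' = e ∨ e' = Prod.swap e))).card * n ^ (m - 2) := by
            rw [Finset.sum_const, smul_eq_mul]
        _ ≤ D.card * n ^ (m - 2) :=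
            Nat.mul_le_mul_right _ (Finset.card_le_card (Finset.filter_subset _ _))
    exact add_le_add part1 part2
  calc _ ≤ ∑ _e ∈ D, (2 * n ^ (m - 1) + D.card * n ^ (m - 2)) := Finset.sum_le_sum key
    _ = _ := by
        rw [Finset.sum_const, smul_eq_mul]
        ring

lemma arith_mu (C s mm MM : ℝ) (hC : 0 < C) (hs0 : 0 ≤ s)
    (h9C : 9 ≤ C*s) (hmlb : C*s ≤ mm) (hMR : MM = mm*mm - mm) :
    7*C^2/8*(s*s) ≤ MM := by
  have hcs : 0 ≤ C*s := mul_nonneg hC.le hs0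
  nlinarith [mul_le_mul_of_nonneg_left hmlb hcs,
    mul_le_mul_of_nonneg_left h9C hcs,
    mul_nonneg (sub_nonneg.2 hmlb) (by linarith : (0:ℝ) ≤ mm - 1)]

lemma arith_m3 (C s mm : ℝ) (hC : 0 < C) (hs0 : 0 ≤ s) (hC3 : C^3 ≤ s)
    (hm2s : mm ≤ 2*(C*s)) (hm0 : 0 ≤ mm) :
    mm*mm*mm ≤ 16*((s*s)*(s*s)) := by
  have hcs : (0:ℝ) ≤ 2*(C*s) := by positivity
  have h1 : mm * mm ≤ (2*(C*s)) * (2*(C*s)) := mul_le_mul hm2s hm2s hm0 hcs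
  have h2 : mm * mm * mm ≤ (2*(C*s)) * (2*(C*s)) * (2*(C*s)) :=
    mul_le_mul h1 hm2s hm0 (mul_nonneg hcs hcs)
  have h3 : C^3 * (s*(s*s)) ≤ s * (s*(s*s)) :=
    mul_le_mul_of_nonneg_right hC3 (by positivity)
  nlinarith [h2, h3, sq_nonneg (s*s)]

lemma arith_M4 (C s mm MM : ℝ) (hC : 0 < C) (hs0 : 0 ≤ s)
    (hm2s : mm ≤ 2*(C*s)) (hm0 : 0 ≤ mm) (hMR : MM = mm*mm - mm) :
    MM ≤ 4*C^2*(s*s) := by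
  have hcs : (0:ℝ) ≤ 2*(C*s) := by positivity
  nlinarith [mul_le_mul hm2s hm2s hm0 hcs]


/-- For `m = ⌈C√n⌉` balls in `n` bins, the number `T` of bins with at least two balls
satisfies `P(T < C²/4) ≤ 576/C²` for all `n` large enough. -/
theorem stmt13 (C : ℝ) (hC : 0 < C) :
    ∃ N : ℕ, ∀ n ≥ N,
      ((Finset.univ.filter fun ω : Fin ⌈C * Real.sqrt n⌉₊ → Fin n =>
          ((Finset.univ.filter fun i : Fin n =>
              2 ≤ (Finset.univ.filter fun j => ω j = i).card).card : ℝ) < C^2/4).card : ℝ)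
        / (n:ℝ)^(⌈C * Real.sqrt n⌉₊) ≤ 576 / C^2 := by
  refine ⟨⌈(9/C + C^3)^2⌉₊ + 1, fun n hn => ?_⟩
  have hn1 : 1 ≤ n := le_trans (Nat.le_add_left 1 _) hn
  have hn0R : (0:ℝ) < n := by exact_mod_cast Nat.lt_of_lt_of_le Nat.zero_lt_one hn1
  set s : ℝ := Real.sqrt (n:ℝ) with hsdef
  set m : ℕ := ⌈C * s⌉₊ with hmdef
  have hs0 : 0 ≤ s := Real.sqrt_nonneg _
  have hs2 : s * s = (n:ℝ) := Real.mul_self_sqrt (le_of_lt hn0R)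
  have hC2 : (0:ℝ) < C^2 := by positivity
  -- n is large
  have hngeR : ((9/C + C^3)^2 : ℝ) ≤ n := by
    calc ((9/C + C^3)^2 : ℝ) ≤ (⌈(9/C + C^3)^2⌉₊ : ℕ) := Nat.le_ceil _
      _ ≤ (n:ℝ) := by exact_mod_cast Nat.cast_le.2 (le_trans (Nat.le_succ _) hn)
  have hsR : 9/C + C^3 ≤ s := by
    have h0 : (0:ℝ) ≤ 9/C + C^3 := by positivity
    have h1 := Real.sqrt_le_sqrt hngeR
    rwa [Real.sqrt_sq h0] at h1
  have h9div : 9/C ≤ s := by linarith only [hsR, pow_pos hC 3]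
  have hC3 : C^3 ≤ s := by linarith only [hsR, div_pos (by norm_num : (0:ℝ) < 9) hC]
  have h9C : 9 ≤ C * s := by
    have := (div_le_iff₀ hC).1 h9div
    linarith
  -- m facts
  have hmlb : C * s ≤ (m:ℝ) := Nat.le_ceil _
  have hmub : (m:ℝ) ≤ C * s + 1 := le_of_lt (Nat.ceil_lt_add_one (by positivity))
  have hm2s : (m:ℝ) ≤ 2 * (C * s) := by linarith only [hmub, h9C]
  have hm9 : (9:ℝ) ≤ (m:ℝ) := le_trans h9C hmlb
  have hm9' : 9 ≤ m := by exact_mod_cast hm9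
  have hm2 : 2 ≤ m := by omega
  set M : ℕ := ((Finset.univ : Finset (Fin m)).offDiag).card with hM
  have hMval : M = m * m - m := by
    rw [hM, Finset.offDiag_card, Finset.card_univ, Fintype.card_fin]
  have hmm : m ≤ m * m := Nat.le_mul_of_pos_left m (by omega)
  have hMR : (M:ℝ) = (m:ℝ) * (m:ℝ) - (m:ℝ) := by
    rw [hMval, Nat.cast_sub hmm]
    push_cast
    ring
  -- power identities
  have e1 : ((n:ℝ))^(m-1) * n = (n:ℝ)^m := by
    rw [← pow_succ, show m - 1 + 1 = m by omega]
  have e2 : ((n:ℝ))^(m-2) * n = (n:ℝ)^(m-1) := by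
    rw [← pow_succ, show m - 2 + 1 = m - 1 by omega]
  have hK1 : (0:ℝ) ≤ (n:ℝ)^(m-1) := by positivity
  have hK2 : (0:ℝ) ≤ (n:ℝ)^(m-2) := by positivity
  -- cast sums
  have hSpR : (∑ ω : Fin m → Fin n, (pcard m n ω : ℝ)) = (M:ℝ) * (n:ℝ)^(m-1) := by
    rw [← Nat.cast_sum, sum_p m n, ← hM]
    push_cast
    ring
  have hSp2R : (∑ ω : Fin m → Fin n, (pcard m n ω : ℝ) * (pcard m n ω : ℝ))
      ≤ 2 * (M:ℝ) * (n:ℝ)^(m-1) + (M:ℝ) * (M:ℝ) * (n:ℝ)^(m-2) := by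
    have h := (Nat.cast_le (α := ℝ)).2 (sum_p_sq m n)
    push_cast at h
    rw [← hM] at h
    exact h
  have hSqR : (∑ ω : Fin m → Fin n, (qcard m n ω : ℝ))
      ≤ (m:ℝ) * (m:ℝ) * (m:ℝ) * (n:ℝ)^(m-2) := by
    have h := (Nat.cast_le (α := ℝ)).2 (sum_q m n)
    push_cast at h
    exact h
  -- mean
  set μ : ℝ := (M:ℝ) / n with hμdef
  have hCn : C^2 * (s * s) = C^2 * (n:ℝ) := by rw [hs2]
  have hmu : 7 * C^2 / 8 ≤ μ := by
    rw [hμdef, le_div_iff₀ hn0R, ← hs2]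
    exact arith_mu C s (m:ℝ) (M:ℝ) hC hs0 h9C hmlb hMR
  -- variance bound
  have hexp : ∑ ω : Fin m → Fin n, ((pcard m n ω : ℝ) - μ)^2
      = (∑ ω : Fin m → Fin n, (pcard m n ω : ℝ) * (pcard m n ω : ℝ))
        - 2 * μ * (∑ ω : Fin m → Fin n, (pcard m n ω : ℝ))
        + ((n:ℝ)^m) * μ^2 := by
    have h1 : ∀ ω : Fin m → Fin n, ((pcard m n ω : ℝ) - μ)^2
        = (pcard m n ω : ℝ) * (pcard m n ω : ℝ) - 2 * μ * (pcard m n ω : ℝ) + μ^2 :=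
      fun ω => by ring
    rw [Finset.sum_congr rfl fun ω _ => h1 ω, Finset.sum_add_distrib,
      Finset.sum_sub_distrib, ← Finset.mul_sum, Finset.sum_const, Finset.card_univ,
      Fintype.card_fun, Fintype.card_fin, Fintype.card_fin, nsmul_eq_mul]
    push_cast
    ring
  have hnm : ((n:ℝ))^m = (n:ℝ)^(m-2) * n * n := by
    calc ((n:ℝ))^m = (n:ℝ)^(m-1) * n := e1.symm
      _ = (n:ℝ)^(m-2) * n * n := by rw [← e2]
  have hvar : ∑ ω : Fin m → Fin n, ((pcard m n ω : ℝ) - μ)^2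
      ≤ 2 * (M:ℝ) * (n:ℝ)^(m-1) := by
    rw [hexp, hSpR]
    have hzero : ((n:ℝ)^m) * μ^2 - 2 * μ * ((M:ℝ) * (n:ℝ)^(m-1))
        + (M:ℝ) * (M:ℝ) * (n:ℝ)^(m-2) = 0 := by
      rw [hnm, show (n:ℝ)^(m-1) = (n:ℝ)^(m-2) * n from e2.symm, hμdef]
      field_simp
      ring
    linarith [hSp2R]
  -- the bad events
  set B : Finset (Fin m → Fin n) := Finset.univ.filter fun ω : Fin m → Fin n =>
    ((Finset.univ.filter fun i : Fin n =>
        2 ≤ (Finset.univ.filter fun j => ω j = i).card).card : ℝ) < C^2/4 with hB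
  set B1 : Finset (Fin m → Fin n) := Finset.univ.filter fun ω : Fin m → Fin n =>
    (C^2/4 : ℝ) ≤ (qcard m n ω : ℝ) with hB1
  set B2 : Finset (Fin m → Fin n) := Finset.univ.filter fun ω : Fin m → Fin n =>
    (pcard m n ω : ℝ) < 3 * C^2 / 4 with hB2
  have hsub : B ⊆ B1 ∪ B2 := by
    intro ω hω
    by_cases h1 : ω ∈ B1
    · exact Finset.mem_union_left _ h1
    · refine Finset.mem_union_right _ ?_
      rw [hB2, Finset.mem_filter]
      refine ⟨Finset.mem_univ _, ?_⟩
      rw [hB, Finset.mem_filter] at hω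
      have hT : (Tcard m n ω : ℝ) < C^2/4 := hω.2
      rw [hB1, Finset.mem_filter] at h1
      push_neg at h1
      have hq : (qcard m n ω : ℝ) < C^2/4 := h1 (Finset.mem_univ _)
      have hpt : (pcard m n ω : ℝ) ≤ 2 * (Tcard m n ω : ℝ) + (qcard m n ω : ℝ) := by
        exact_mod_cast pointwise_s13 m n ω
      linarith
  -- Markov for B1
  have hmarkov : (B1.card : ℝ) * (C^2/4) ≤ (m:ℝ) * (m:ℝ) * (m:ℝ) * (n:ℝ)^(m-2) := by
    calc (B1.card : ℝ) * (C^2/4) = ∑ _ω ∈ B1, (C^2/4 : ℝ) := by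
          rw [Finset.sum_const, nsmul_eq_mul]
      _ ≤ ∑ ω ∈ B1, (qcard m n ω : ℝ) := by
          refine Finset.sum_le_sum fun ω hω => ?_
          rw [hB1, Finset.mem_filter] at hω
          exact hω.2
      _ ≤ ∑ ω : Fin m → Fin n, (qcard m n ω : ℝ) :=
          Finset.sum_le_sum_of_subset_of_nonneg (Finset.subset_univ _)
            (fun ω _ _ => Nat.cast_nonneg _)
      _ ≤ _ := hSqR
  -- Chebyshev for B2
  have hcheb : (B2.card : ℝ) * ((C^2/8)^2) ≤ 2 * (M:ℝ) * (n:ℝ)^(m-1) := by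
    calc (B2.card : ℝ) * ((C^2/8)^2) = ∑ _ω ∈ B2, ((C^2/8)^2 : ℝ) := by
          rw [Finset.sum_const, nsmul_eq_mul]
      _ ≤ ∑ ω ∈ B2, ((pcard m n ω : ℝ) - μ)^2 := by
          refine Finset.sum_le_sum fun ω hω => ?_
          rw [hB2, Finset.mem_filter] at hω
          have hp := hω.2
          have hd : (C^2/8 : ℝ) ≤ μ - (pcard m n ω : ℝ) := by linarith
          calc ((C^2/8)^2 : ℝ) ≤ (μ - (pcard m n ω : ℝ))^2 :=
                pow_le_pow_left₀ (by positivity) hd 2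
            _ = ((pcard m n ω : ℝ) - μ)^2 := by ring
      _ ≤ ∑ ω : Fin m → Fin n, ((pcard m n ω : ℝ) - μ)^2 :=
          Finset.sum_le_sum_of_subset_of_nonneg (Finset.subset_univ _)
            (fun ω _ _ => sq_nonneg _)
      _ ≤ _ := hvar
  -- numeric bounds
  have hm3 : (m:ℝ) * (m:ℝ) * (m:ℝ) ≤ 16 * ((n:ℝ) * (n:ℝ)) := by
    rw [← hs2]
    exact arith_m3 C s (m:ℝ) hC hs0 hC3 hm2s (Nat.cast_nonneg m)
  have hM4 : (M:ℝ) ≤ 4 * C^2 * (n:ℝ) := by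
    rw [← hs2]
    exact arith_M4 C s (m:ℝ) (M:ℝ) hC hs0 hm2s (Nat.cast_nonneg m) hMR
  -- final assembly
  have hBcard : (B.card : ℝ) ≤ (B1.card : ℝ) + (B2.card : ℝ) := by
    have := le_trans (Finset.card_le_card hsub) (Finset.card_union_le B1 B2)
    exact_mod_cast this
  have hG1 : (B1.card : ℝ) * C^2 ≤ 64 * (n:ℝ)^m := by
    rw [hnm]
    linarith only [hmarkov, mul_le_mul_of_nonneg_right hm3 hK2]
  have hG2 : (B2.card : ℝ) * C^2 ≤ 512 * (n:ℝ)^m := by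
    have h1 : 2 * (M:ℝ) * (n:ℝ)^(m-1) ≤ 8 * C^2 * ((n:ℝ)^(m-1) * n) := by
      linarith only [mul_le_mul_of_nonneg_right hM4 hK1]
    have h2 : (B2.card : ℝ) * C^2 * C^2 ≤ 512 * C^2 * ((n:ℝ)^(m-1) * n) := by
      linarith only [hcheb, h1]
    rw [e1] at h2
    have hstep : (B2.card : ℝ) * C^2 * C^2 ≤ (512 * (n:ℝ)^m) * C^2 := by linarith
    exact (mul_le_mul_iff_of_pos_right hC2).1 hstep
  rw [div_le_div_iff₀ (by positivity) hC2]
  have hBC := mul_le_mul_of_nonneg_right hBcard hC2.le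
  have hexpand : ((B1.card : ℝ) + B2.card) * C^2 = (B1.card : ℝ) * C^2 + (B2.card : ℝ) * C^2 := by ring
  linarith only [hBC, hG1, hG2, hexpand]
end
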